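/- arXiv:1610.03561 — 6 statements merged into one kernel-verified Lean document; each statement's English description precedes it below -/
import Mathlib

section
/- (Acyclicity of a tensor product is detected on the factors; this is the key step showing that the subcategory of p_k-acyclic modules is a prime ideal.) Let V and W be vector spaces over 𝔽₂, equipped with 𝔽₂-linear endomorphisms d_V : V → V and d_W : W → W satisfying d_V ∘ d_V = 0 and d_W ∘ d_W = 0, and let D := d_V ⊗ id_W + id_V ⊗ d_W on V ⊗_{𝔽₂} W. Then H(V ⊗_{𝔽₂} W, D) = 0 if and only if H(V, d_V) = 0 or H(W, d_W) = 0. -/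
/-- The Margolis homology of an `𝔽₂`-linear endomorphism `d` (with `d ∘ d = 0`):
the quotient `ker d / range d`. -/
abbrev Margolis {V : Type*} [AddCommGroup V] [Module (ZMod 2) V]
    (d : V →ₗ[ZMod 2] V) : Type _ :=
  LinearMap.ker d ⧸ (LinearMap.range d).comap (LinearMap.ker d).subtype

lemma margolis_subsingleton_iff {V : Type*} [AddCommGroup V] [Module (ZMod 2) V]
    (d : V →ₗ[ZMod 2] V) :
    Subsingleton (Margolis d) ↔ LinearMap.ker d ≤ LinearMap.range d := by
  rw [Submodule.Quotient.subsingleton_iff, Submodule.eq_top_iff']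
  constructor
  · intro h x hx
    simpa [Submodule.mem_comap] using h ⟨x, hx⟩
  · intro h x
    simpa [Submodule.mem_comap] using h x.2

/-- An acyclic complex over a field admits a contracting homotopy. -/
lemma exists_homotopy {V : Type*} [AddCommGroup V] [Module (ZMod 2) V]
    (d : V →ₗ[ZMod 2] V) (hd : d ∘ₗ d = 0) (hk : LinearMap.ker d ≤ LinearMap.range d) :
    ∃ h : V →ₗ[ZMod 2] V, ∀ x, h (d x) + d (h x) = x := by
  set K := LinearMap.ker d with hK
  obtain ⟨C, hC⟩ := Submodule.exists_isCompl K
  have hrk : ∀ x, d x ∈ K := by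
    intro x
    simp only [hK, LinearMap.mem_ker]
    exact congrFun (congrArg DFunLike.coe hd) x
  -- e : C ≃ K, c ↦ d c
  let f : C →ₗ[ZMod 2] K := (d ∘ₗ C.subtype).codRestrict K (fun c => hrk c)
  have hfinj : Function.Injective f := by
    intro c₁ c₂ hcc
    have h1 : d (↑c₁ - ↑c₂) = 0 := by
      have := congrArg (Subtype.val) hcc
      simp only [f, LinearMap.codRestrict_apply, LinearMap.comp_apply,
        Submodule.subtype_apply] at this
      rw [map_sub, sub_eq_zero]; exact this
    have h2 : (↑c₁ - ↑c₂ : V) ∈ K ⊓ C := ⟨h1, sub_mem c₁.2 c₂.2⟩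
    rw [hC.inf_eq_bot] at h2
    exact Subtype.ext (sub_eq_zero.mp (by simpa using h2))
  have hfsurj : Function.Surjective f := by
    intro k
    obtain ⟨x, hx⟩ := hk k.2
    have hdec := Submodule.projection_add_projection_eq_self hC x
    refine ⟨Submodule.projectionOnto C K hC.symm x, ?_⟩
    apply Subtype.ext
    simp only [f, LinearMap.codRestrict_apply, LinearMap.comp_apply, Submodule.subtype_apply]
    have : d x = d ↑(Submodule.projectionOnto K C hC x)
        + d ↑(Submodule.projectionOnto C K hC.symm x) := by
      rw [← map_add]; exact congrArg d hdec.symm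
    have hker : d ↑(Submodule.projectionOnto K C hC x) = 0 :=
      (Submodule.projectionOnto K C hC x).2
    rw [hx, hker, zero_add] at this
    exact this.symm
  let e : C ≃ₗ[ZMod 2] K := LinearEquiv.ofBijective f ⟨hfinj, hfsurj⟩
  refine ⟨C.subtype ∘ₗ (e.symm : K →ₗ[ZMod 2] C) ∘ₗ Submodule.projectionOnto K C hC, ?_⟩
  intro x
  set k := Submodule.projectionOnto K C hC x with hk'
  set c := Submodule.projectionOnto C K hC.symm x with hc'
  have hdec : (↑k : V) + ↑c = x := Submodule.projection_add_projection_eq_self hC x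
  have hdx : d x = d ↑c := by
    rw [← hdec, map_add, (show d ↑k = 0 from k.2), zero_add]
  have h1 : Submodule.projectionOnto K C hC (d x) = f c := by
    apply Subtype.ext
    rw [hdx]
    exact congrArg Subtype.val
      (Submodule.projectionOnto_apply_left hC (⟨d ↑c, hrk _⟩ : K))
  have h2 : e.symm (f c) = c := e.symm_apply_apply c
  have h3 : d ↑(e.symm k) = ↑k := by
    have h4 := congrArg Subtype.val (e.apply_symm_apply k)
    simp only [e, f, LinearEquiv.ofBijective_apply, LinearMap.codRestrict_apply,
      LinearMap.comp_apply, Submodule.subtype_apply] at h4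
    exact h4
  simp only [LinearMap.comp_apply, Submodule.subtype_apply, LinearEquiv.coe_coe, h1, ← hk']
  rw [h2, h3, add_comm]
  exact hdec

open TensorProduct

lemma char_two_add_self {M : Type*} [AddCommGroup M] [Module (ZMod 2) M] (x : M) :
    x + x = 0 := by
  have : (2 : ZMod 2) • x = 0 := by
    rw [show (2 : ZMod 2) = 0 from rfl, zero_smul]
  rwa [two_smul] at this

open TensorProduct in
/-- The Margolis homology of a tensor product vanishes iff that of one of the
factors does. -/
theorem margolis_tensor_acyclic_iff {V W : Type*} [AddCommGroup V] [Module (ZMod 2) V]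
    [AddCommGroup W] [Module (ZMod 2) W]
    (dV : V →ₗ[ZMod 2] V) (dW : W →ₗ[ZMod 2] W)
    (hV : dV ∘ₗ dV = 0) (hW : dW ∘ₗ dW = 0) :
    Subsingleton
      (Margolis (TensorProduct.map dV LinearMap.id + TensorProduct.map LinearMap.id dW))
      ↔ Subsingleton (Margolis dV) ∨ Subsingleton (Margolis dW) := by
  set D := TensorProduct.map dV LinearMap.id + TensorProduct.map LinearMap.id dW with hD
  rw [margolis_subsingleton_iff, margolis_subsingleton_iff, margolis_subsingleton_iff]
  constructor
  · -- hard direction: contrapositive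
    intro hVW
    by_contra hor
    push_neg at hor
    obtain ⟨hV', hW'⟩ := hor
    rw [SetLike.not_le_iff_exists] at hV' hW'
    obtain ⟨v, hvk, hvr⟩ := hV'
    obtain ⟨w, hwk, hwr⟩ := hW'
    -- dual functionals vanishing on the ranges
    obtain ⟨f₀, hf₀⟩ : ∃ φ : Module.Dual (ZMod 2) (V ⧸ LinearMap.range dV),
        φ (Submodule.Quotient.mk v) ≠ 0 := by
      by_contra hcon
      push_neg at hcon
      have := (Module.forall_dual_apply_eq_zero_iff (ZMod 2)
        (Submodule.Quotient.mk v : V ⧸ LinearMap.range dV)).mp hcon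
      rw [Submodule.Quotient.mk_eq_zero] at this
      exact hvr this
    obtain ⟨g₀, hg₀⟩ : ∃ ψ : Module.Dual (ZMod 2) (W ⧸ LinearMap.range dW),
        ψ (Submodule.Quotient.mk w) ≠ 0 := by
      by_contra hcon
      push_neg at hcon
      have := (Module.forall_dual_apply_eq_zero_iff (ZMod 2)
        (Submodule.Quotient.mk w : W ⧸ LinearMap.range dW)).mp hcon
      rw [Submodule.Quotient.mk_eq_zero] at this
      exact hwr this
    set f : V →ₗ[ZMod 2] ZMod 2 := f₀ ∘ₗ (LinearMap.range dV).mkQ with hf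
    set g : W →ₗ[ZMod 2] ZMod 2 := g₀ ∘ₗ (LinearMap.range dW).mkQ with hg
    have hfd : ∀ a, f (dV a) = 0 := by
      intro a
      have : ((LinearMap.range dV).mkQ (dV a)) = 0 :=
        (Submodule.Quotient.mk_eq_zero _).mpr ⟨a, rfl⟩
      simp [hf, LinearMap.comp_apply, this]
    have hgd : ∀ b, g (dW b) = 0 := by
      intro b
      have : ((LinearMap.range dW).mkQ (dW b)) = 0 :=
        (Submodule.Quotient.mk_eq_zero _).mpr ⟨b, rfl⟩
      simp [hg, LinearMap.comp_apply, this]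
    set φ : V ⊗[ZMod 2] W →ₗ[ZMod 2] ZMod 2 :=
      TensorProduct.lift ((LinearMap.mul (ZMod 2) (ZMod 2)).compl₁₂ f g) with hφ
    have hφtmul : ∀ (a : V) (b : W), φ (a ⊗ₜ[ZMod 2] b) = f a * g b := by
      intro a b
      simp [hφ, LinearMap.compl₁₂_apply]
    have hφD : ∀ z, φ (D z) = 0 := by
      intro z
      have : φ ∘ₗ D = 0 := by
        ext a b
        simp only [LinearMap.comp_apply, LinearMap.zero_apply, hD, LinearMap.add_apply,
          TensorProduct.map_tmul, LinearMap.id_apply, map_add, hφtmul,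
          TensorProduct.AlgebraTensorModule.curry_apply, TensorProduct.curry_apply,
          LinearMap.coe_restrictScalars, LinearMap.compr₂_apply, TensorProduct.mk_apply]
        rw [hfd, hgd]
        ring
      simpa using congrFun (congrArg DFunLike.coe this) z
    have hmem : v ⊗ₜ[ZMod 2] w ∈ LinearMap.ker D := by
      rw [LinearMap.mem_ker, hD]
      have h1 : dV v = 0 := hvk
      have h2 : dW w = 0 := hwk
      simp [h1, h2]
    obtain ⟨z, hz⟩ := hVW hmem
    have : φ (v ⊗ₜ[ZMod 2] w) = 0 := by rw [← hz]; exact hφD z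
    rw [hφtmul] at this
    have hfv : f v ≠ 0 := by simpa [hf] using hf₀
    have hgw : g w ≠ 0 := by simpa [hg] using hg₀
    exact (mul_ne_zero hfv hgw) this
  · rintro (h | h)
    · obtain ⟨hmap, hh⟩ := exists_homotopy dV hV h
      intro x hx
      have hcontr : ∀ y : V ⊗[ZMod 2] W,
          TensorProduct.map hmap LinearMap.id (D y) + D (TensorProduct.map hmap LinearMap.id y) = y := by
        intro y
        induction y using TensorProduct.induction_on with
        | zero => simp
        | tmul v w =>
          simp only [hD, LinearMap.add_apply, TensorProduct.map_tmul,
            LinearMap.id_apply, map_add]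
          rw [add_add_add_comm, ← TensorProduct.add_tmul, hh v, char_two_add_self, add_zero]
        | add a b iha ihb =>
          simp only [map_add]
          rw [add_add_add_comm, iha, ihb]
      have := hcontr x
      rw [show D x = 0 from hx, map_zero, zero_add] at this
      exact ⟨_, this⟩
    · obtain ⟨hmap, hh⟩ := exists_homotopy dW hW h
      intro x hx
      have hcontr : ∀ y : V ⊗[ZMod 2] W,
          TensorProduct.map LinearMap.id hmap (D y) + D (TensorProduct.map LinearMap.id hmap y) = y := by
        intro y
        induction y using TensorProduct.induction_on with
        | zero => simp
        | tmul v w =>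
          simp only [hD, LinearMap.add_apply, TensorProduct.map_tmul,
            LinearMap.id_apply, map_add]
          rw [add_add_add_comm, char_two_add_self, zero_add,
            ← TensorProduct.tmul_add, hh w]
        | add a b iha ihb =>
          simp only [map_add]
          rw [add_add_add_comm, iha, ihb]
      have := hcontr x
      rw [show D x = 0 from hx, map_zero, zero_add] at this
      exact ⟨_, this⟩
end

section
/- (The cohomology of an exterior algebra on one generator is a polynomial algebra; dimension statement.) Regard 𝔽₂ as an R-module via the quotient map R → R/(x) ≅ 𝔽₂. Then for every integer n ≥ 0, the 𝔽₂-vector space Ext^n_R(𝔽₂, 𝔽₂) is one-dimensional. -/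
noncomputable section

open Polynomial CategoryTheory

/-- The exterior algebra `R = 𝔽₂[X]/(X²)` on one generator over `𝔽₂`. -/
abbrev ExtR : Type := AdjoinRoot (X ^ 2 : (ZMod 2)[X])

/-- The class `x` of `X` in `R = 𝔽₂[X]/(X²)`; it satisfies `x² = 0`. -/
abbrev xcl : ExtR := AdjoinRoot.root _

/-- The field `𝔽₂`, regarded as an `R`-module via the quotient map `R → R/(x) ≅ 𝔽₂`. -/
abbrev F2R : Type := ExtR ⧸ Ideal.span {xcl}

lemma xcl_eq : xcl = AdjoinRoot.mk _ (X : (ZMod 2)[X]) := (AdjoinRoot.mk_X).symm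

lemma xcl_sq : xcl * xcl = 0 := by
  rw [xcl_eq, ← map_mul, ← sq, AdjoinRoot.mk_self]

lemma ann_xcl {r : ExtR} (h : xcl * r = 0) : ∃ s, xcl * s = r := by
  obtain ⟨p, rfl⟩ := AdjoinRoot.mk_surjective r
  rw [xcl_eq, ← map_mul, AdjoinRoot.mk_eq_zero] at h
  obtain ⟨q, hq⟩ := h
  have hX : (X : (ZMod 2)[X]) ≠ 0 := X_ne_zero
  have hp : p = X * q := by
    apply mul_left_cancel₀ hX
    rw [hq]; ring
  exact ⟨AdjoinRoot.mk _ q, by rw [xcl_eq, ← map_mul, hp]⟩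

def mulx : ModuleCat.of ExtR ExtR ⟶ ModuleCat.of ExtR ExtR :=
  ModuleCat.ofHom (LinearMap.lsmul ExtR ExtR xcl)

lemma mulx_mulx : mulx ≫ mulx = 0 :=
  ModuleCat.hom_ext <| LinearMap.ext fun (r : ExtR) => show xcl • (xcl • r) = 0 by
    rw [smul_eq_mul, smul_eq_mul, ← mul_assoc, xcl_sq, zero_mul]

def resComplex : ChainComplex (ModuleCat ExtR) ℕ :=
  ChainComplex.of (fun _ => ModuleCat.of ExtR ExtR) (fun _ => mulx) (fun _ => mulx_mulx)

instance (n : ℕ) : Projective (resComplex.X n) :=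
  ModuleCat.projective_of_free (Module.Basis.singleton PUnit.{1} ExtR)

def aug : ModuleCat.of ExtR ExtR ⟶ ModuleCat.of ExtR F2R :=
  ModuleCat.ofHom (Ideal.span {xcl}).mkQ

lemma aug_surjective : Function.Surjective aug := Submodule.mkQ_surjective (Ideal.span {xcl})

lemma mulx_aug : mulx ≫ aug = 0 :=
  ModuleCat.hom_ext <| LinearMap.ext fun (r : ExtR) => show (Ideal.span {xcl}).mkQ (xcl • r) = 0 by
    rw [smul_eq_mul, Submodule.mkQ_apply, Submodule.Quotient.mk_eq_zero]
    exact Ideal.mul_mem_right _ _ (Ideal.subset_span rfl)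

lemma resComplex_d (n : ℕ) : resComplex.d (n+1) n = mulx := ChainComplex.of_d (fun _ => ModuleCat.of ExtR ExtR) (fun _ => mulx) n

lemma resComplex_exactAt_succ (n : ℕ) : resComplex.ExactAt (n+1) := by
  rw [HomologicalComplex.exactAt_iff' _ (n+1+1) (n+1) n (by simp) (by simp)]
  dsimp [HomologicalComplex.sc', HomologicalComplex.shortComplexFunctor', resComplex]
  simp only [ChainComplex.of_d]
  rw [ShortComplex.moduleCat_exact_iff]
  show ∀ r : ExtR, xcl * r = 0 → ∃ s : ExtR, xcl * s = r
  intro r hr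
  exact ann_xcl hr

def resPi : resComplex ⟶ (ChainComplex.single₀ (ModuleCat ExtR)).obj (ModuleCat.of ExtR F2R) :=
  (ChainComplex.toSingle₀Equiv _ _).symm ⟨aug, by rw [resComplex_d]; exact mulx_aug⟩

lemma resPi_f_zero : resPi.f 0 = aug :=
  ChainComplex.toSingle₀Equiv_symm_apply_f_zero _ _

lemma exact_mulx_aug : (ShortComplex.mk mulx aug mulx_aug).Exact := by
  rw [ShortComplex.moduleCat_exact_iff]
  show ∀ r : ExtR, (Ideal.span {xcl}).mkQ r = 0 → ∃ s : ExtR, xcl * s = r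
  intro r hr
  rw [Submodule.mkQ_apply, Submodule.Quotient.mk_eq_zero, Ideal.mem_span_singleton'] at hr
  obtain ⟨b, hb⟩ := hr
  exact ⟨b, by rw [mul_comm]; exact hb⟩

def resolution : ProjectiveResolution (ModuleCat.of ExtR F2R) where
  complex := resComplex
  π := resPi
  quasiIso := ⟨fun n => by
    cases n with
    | zero =>
      rw [ChainComplex.quasiIsoAt₀_iff, ShortComplex.quasiIso_iff_of_zeros']
      · refine (ShortComplex.exact_and_epi_g_iff_of_iso ?_).2
          ⟨exact_mulx_aug, (ModuleCat.epi_iff_surjective aug).2 aug_surjective⟩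
        refine ShortComplex.isoMk (Iso.refl _) (Iso.refl _) (Iso.refl _) ?_ ?_
        · dsimp [HomologicalComplex.shortComplexFunctor']
          erw [Category.id_comp]
        · dsimp [HomologicalComplex.shortComplexFunctor']
          simp [resPi_f_zero]
          exact (Category.id_comp aug).trans (Category.comp_id aug).symm
      all_goals rfl
    | succ n =>
      rw [quasiIsoAt_iff_exactAt']
      · exact resComplex_exactAt_succ n
      · apply ChainComplex.exactAt_succ_single_obj⟩

abbrev F2Rmod := ModuleCat.of ExtR F2R

abbrev K : CochainComplex (ModuleCat ExtR) ℕ :=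
  resComplex.linearYonedaObj ExtR F2Rmod

lemma xcl_smul_f2r (z : F2R) : xcl • z = 0 := by
  obtain ⟨s, rfl⟩ := Submodule.Quotient.mk_surjective _ z
  rw [← Submodule.Quotient.mk_smul, smul_eq_mul]
  rw [Submodule.Quotient.mk_eq_zero]
  exact Ideal.mul_mem_right _ _ (Ideal.subset_span rfl)

lemma K_d_zero (i j : ℕ) : K.d i j = 0 := by
  by_cases h : j = i + 1
  · subst h
    refine ModuleCat.hom_ext <| LinearMap.ext fun (f : ModuleCat.of ExtR ExtR ⟶ F2Rmod) => ?_
    show resComplex.d (i+1) i ≫ f = 0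
    rw [resComplex_d]
    refine ModuleCat.hom_ext <| LinearMap.ext fun (r : ExtR) => ?_
    show f (xcl • r) = 0
    rw [map_smul, xcl_smul_f2r]
  · exact K.shape i j (fun h' => h h'.symm)

def homologyIsoX (n : ℕ) : K.homology n ≅ K.X n :=
  (ShortComplex.LeftHomologyData.ofZeros (K.sc n) (K_d_zero _ _) (K_d_zero _ _)).homologyIso

def step3 (n : ℕ) : (K.X n : Type) ≃ₗ[ExtR] F2R :=
  (ModuleCat.homLinearEquiv (S := ExtR)).trans (LinearMap.ringLmapEquivSelf ExtR ExtR F2R)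

lemma spanEq : Ideal.span {xcl} =
    Ideal.map (Ideal.Quotient.mk (Ideal.span {(X^2 : (ZMod 2)[X])})) (Ideal.span {X}) := by
  rw [Ideal.map_span, Set.image_singleton]
  rfl

lemma supEq : Ideal.span {(X^2 : (ZMod 2)[X])} ⊔ Ideal.span {X}
    = Ideal.span {(X : (ZMod 2)[X]) - C 0} := by
  rw [map_zero, sub_zero]
  rw [sup_eq_right]
  exact Ideal.span_singleton_le_span_singleton.2 ⟨X, sq X⟩

def f2rEquiv : F2R ≃+* ZMod 2 :=
  (show F2R ≃+* _ from @Ideal.quotEquivOfEq ((ZMod 2)[X] ⧸ Ideal.span {(X^2 : (ZMod 2)[X])}) _ _ _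
    (Ideal.instIsTwoSided_1 _) (Ideal.instIsTwoSided_1 _) spanEq).trans <|
    (DoubleQuot.quotQuotEquivQuotSup (Ideal.span {(X^2 : (ZMod 2)[X])}) (Ideal.span {X})).trans <|
      (Ideal.quotEquivOfEq supEq).trans (quotientSpanXSubCAlgEquiv (0 : ZMod 2)).toRingEquiv


/-- The cohomology of the exterior algebra on one generator is a polynomial algebra:
for every `n ≥ 0`, the `𝔽₂`-vector space `Ext^n_R(𝔽₂, 𝔽₂)` is one-dimensional, i.e.
additively (equivalently, `𝔽₂`-linearly) isomorphic to `𝔽₂`. -/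
theorem ext_f2_f2_one_dimensional (n : ℕ) :
    Nonempty ((((Ext ExtR (ModuleCat ExtR) n).obj
        (Opposite.op (ModuleCat.of ExtR F2R))).obj (ModuleCat.of ExtR F2R))
      ≃+ ZMod 2) := by
  refine ⟨AddEquiv.trans ?_ f2rEquiv.toAddEquiv⟩
  exact ((resolution.isoExt n F2Rmod).toLinearEquiv.trans
    ((homologyIsoX n).toLinearEquiv.trans (step3 n))).toAddEquiv
end
end

section
/- (Margolis homology detects freeness over the exterior algebra on one generator.) Let M be any R-module. Then M is a free R-module if and only if its Margolis homology vanishes, i.e. if and only if ker(x· : M → M) = range(x· : M → M). -/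
noncomputable section

open Polynomial

lemma xcl_mul_xcl : (xcl : ExtR) * xcl = 0 := by
  have h := AdjoinRoot.mk_self (f := (X ^ 2 : (ZMod 2)[X]))
  rw [map_pow, AdjoinRoot.mk_X] at h
  rw [← sq]
  exact h

lemma exists_of_mul_eq_zero (c : ExtR) (h : xcl * c = 0) : ∃ d : ExtR, c = xcl * d := by
  induction c using AdjoinRoot.induction_on with
  | ih p =>
    have hx : (xcl : ExtR) = AdjoinRoot.mk _ X := (AdjoinRoot.mk_X).symm
    rw [hx, ← map_mul, AdjoinRoot.mk_eq_zero] at h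
    obtain ⟨q, hq⟩ := h
    have hp : p = X * q := by
      apply mul_left_cancel₀ (X_ne_zero (R := ZMod 2))
      rw [hq]; ring
    exact ⟨AdjoinRoot.mk _ q, by rw [hx, ← map_mul, ← hp]⟩

lemma deg_le_one_of_lt_two {p : (ZMod 2)[X]} (h : p.degree < 2) : p.degree ≤ 1 :=
  Order.lt_succ_iff.mp h

lemma exists_repr (c : ExtR) : ∃ a b : ZMod 2, c = algebraMap (ZMod 2) ExtR a + b • xcl := by
  induction c using AdjoinRoot.induction_on with
  | ih p =>
    have hmon : (X ^ 2 : (ZMod 2)[X]).Monic := monic_X_pow 2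
    have hmk : AdjoinRoot.mk _ p = AdjoinRoot.mk (X ^ 2) (p %ₘ X ^ 2) := by
      conv_lhs => rw [← modByMonic_add_div p (X ^ 2)]
      rw [map_add, map_mul, AdjoinRoot.mk_self, zero_mul, add_zero]
    have hdeg : (p %ₘ X ^ 2).degree ≤ 1 := by
      apply deg_le_one_of_lt_two
      simpa [degree_X_pow] using degree_modByMonic_lt p hmon
    set q := p %ₘ X ^ 2 with hqdef
    have hq2 : q = C (q.coeff 1) * X + C (q.coeff 0) := eq_X_add_C_of_degree_le_one hdeg
    refine ⟨q.coeff 0, q.coeff 1, ?_⟩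
    rw [hmk]
    conv_lhs => rw [hq2]
    rw [map_add, map_mul, AdjoinRoot.mk_X, AdjoinRoot.mk_C, AdjoinRoot.mk_C]
    rw [Algebra.smul_def, AdjoinRoot.algebraMap_eq, add_comm]

lemma repr_eq_zero (a b : ZMod 2) (h : algebraMap (ZMod 2) ExtR a + b • xcl = 0) :
    a = 0 ∧ b = 0 := by
  have h2 : AdjoinRoot.mk (X ^ 2 : (ZMod 2)[X]) (C a + C b * X) = 0 := by
    rw [map_add, map_mul, AdjoinRoot.mk_X, AdjoinRoot.mk_C, AdjoinRoot.mk_C]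
    rw [← h, Algebra.smul_def, AdjoinRoot.algebraMap_eq]
  rw [AdjoinRoot.mk_eq_zero] at h2
  have hq : (C a + C b * X : (ZMod 2)[X]) = 0 := by
    refine eq_zero_of_dvd_of_degree_lt h2 ?_
    have hle : (C a + C b * X : (ZMod 2)[X]).degree ≤ 1 := by
      refine le_trans (degree_add_le _ _) (max_le ?_ ?_)
      · exact le_trans degree_C_le (by norm_num)
      · refine le_trans (degree_mul_le _ _) ?_
        simpa [degree_X] using add_le_add degree_C_le (le_refl (X : (ZMod 2)[X]).degree)
    refine lt_of_le_of_lt hle ?_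
    rw [degree_X_pow]
    exact_mod_cast one_lt_two
  constructor
  · simpa using congrArg (fun p => Polynomial.coeff p 0) hq
  · simpa using congrArg (fun p => Polynomial.coeff p 1) hq

/-- Multiplication by `x`, as a linear endomorphism of an `R`-module `M`. -/
def mulX (M : Type*) [AddCommGroup M] [Module ExtR M] : M →ₗ[ExtR] M :=
  LinearMap.lsmul ExtR M xcl

/-- Margolis homology detects freeness over the exterior algebra on one generator:
an `R`-module `M` is free iff `ker(x· : M → M) = range(x· : M → M)`. -/
theorem free_iff_margolis_acyclic (M : Type*) [AddCommGroup M] [Module ExtR M] :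
    Module.Free ExtR M ↔ LinearMap.ker (mulX M) = LinearMap.range (mulX M) := by
  haveI hFact : Fact (Nat.Prime 2) := ⟨Nat.prime_two⟩
  letI : Module (ZMod 2) M := Module.compHom M (algebraMap (ZMod 2) ExtR)
  haveI hTower : IsScalarTower (ZMod 2) ExtR M := ⟨fun a r m => by
    show (a • r) • m = algebraMap (ZMod 2) ExtR a • (r • m)
    rw [Algebra.smul_def, mul_smul]⟩
  haveI hComm : SMulCommClass (ZMod 2) ExtR M := ⟨fun a r m => by
    show algebraMap (ZMod 2) ExtR a • (r • m) = r • (algebraMap (ZMod 2) ExtR a • m)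
    rw [← mul_smul, mul_comm, mul_smul]⟩
  have hmulX : ∀ m : M, mulX M m = xcl • m := fun m => rfl
  have hxx : ∀ m : M, xcl • xcl • m = 0 := fun m => by
    rw [← mul_smul, xcl_mul_xcl, zero_smul]
  constructor
  · intro hF
    refine le_antisymm ?_ ?_
    · -- ker ≤ range
      intro m hm
      rw [LinearMap.mem_ker, hmulX] at hm
      set b := Module.Free.chooseBasis ExtR M with hb
      have hc : ∀ i, xcl * (b.repr m i) = 0 := by
        intro i
        have h0 : b.repr (xcl • m) i = 0 := by rw [hm, map_zero]; rfl
        rw [map_smul] at h0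
        simpa [Finsupp.smul_apply, smul_eq_mul] using h0
      choose d hd using fun i => exists_of_mul_eq_zero _ (hc i)
      refine ⟨∑ i ∈ (b.repr m).support, d i • b i, ?_⟩
      rw [hmulX, Finset.smul_sum]
      conv_rhs => rw [← b.linearCombination_repr m]
      rw [Finsupp.linearCombination_apply, Finsupp.sum]
      refine Finset.sum_congr rfl (fun i _ => ?_)
      rw [← mul_smul, ← hd i]
    · -- range ≤ ker
      rintro m ⟨n, rfl⟩
      rw [LinearMap.mem_ker, hmulX, hmulX]
      exact hxx n
  · intro h
    set K : Submodule (ZMod 2) M := (LinearMap.ker (mulX M)).restrictScalars (ZMod 2) with hK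
    have hmemK : ∀ m : M, m ∈ K ↔ xcl • m = 0 := fun m => by
      rw [hK, Submodule.restrictScalars_mem, LinearMap.mem_ker, hmulX]
    obtain ⟨W, hW⟩ := Submodule.exists_isCompl K
    set bW := Module.Basis.ofVectorSpace (ZMod 2) W with hbW
    set w : Module.Basis.ofVectorSpaceIndex (ZMod 2) W → M := fun i => (bW i : M) with hw
    have hwW : ∀ i, w i ∈ W := fun i => (bW i).2
    have hKW : ∀ m : M, m ∈ W → xcl • m = 0 → m = 0 := by
      intro m h2 h1
      exact Submodule.disjoint_def.mp hW.disjoint m ((hmemK m).mpr h1) h2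
    have hliF2 : LinearIndependent (ZMod 2) w := by
      have := bW.linearIndependent
      exact this.map' W.subtype W.ker_subtype
    have hli : LinearIndependent ExtR w := by
      rw [linearIndependent_iff']
      intro s g hg i hi
      choose a bb hab using fun j => exists_repr (g j)
      have hsum : ∑ j ∈ s, g j • w j
          = (∑ j ∈ s, a j • w j) + xcl • (∑ j ∈ s, bb j • w j) := by
        rw [Finset.smul_sum, ← Finset.sum_add_distrib]
        refine Finset.sum_congr rfl (fun j _ => ?_)
        rw [hab j, add_smul, algebraMap_smul]
        congr 1
        rw [smul_assoc, smul_comm]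
      set v := ∑ j ∈ s, a j • w j with hv
      set u := ∑ j ∈ s, bb j • w j with hu
      have hvu : v + xcl • u = 0 := by rw [← hsum]; exact hg
      have hvW : v ∈ W := Submodule.sum_mem _ (fun j _ => W.smul_mem _ (hwW j))
      have huW : u ∈ W := Submodule.sum_mem _ (fun j _ => W.smul_mem _ (hwW j))
      have hveq : xcl • v = 0 := by
        have := congrArg (fun m => xcl • m) hvu
        simpa [smul_add, hxx u] using this
      have hv0 : v = 0 := hKW v hvW hveq
      have ha : ∀ j ∈ s, a j = 0 :=
        linearIndependent_iff'.mp hliF2 s a (by rw [← hv]; exact hv0)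
      have hueq : xcl • u = 0 := by
        rw [hv0, zero_add] at hvu; exact hvu
      have hu0 : u = 0 := hKW u huW hueq
      have hbb : ∀ j ∈ s, bb j = 0 :=
        linearIndependent_iff'.mp hliF2 s bb (by rw [← hu]; exact hu0)
      rw [hab i, ha i hi, hbb i hi]
      simp
    have hWle : ∀ m ∈ W, m ∈ Submodule.span ExtR (Set.range w) := by
      intro m hm
      have hrange : Set.range w = W.subtype '' Set.range bW := by
        ext y
        simp only [hw, Set.mem_range, Set.mem_image, Submodule.coe_subtype]
        constructor
        · rintro ⟨i, rfl⟩; exact ⟨bW i, ⟨i, rfl⟩, rfl⟩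
        · rintro ⟨z, ⟨i, rfl⟩, rfl⟩; exact ⟨i, rfl⟩
      have hmF2 : m ∈ Submodule.span (ZMod 2) (Set.range w) := by
        rw [hrange, ← Submodule.map_span, bW.span_eq, Submodule.map_top,
          Submodule.range_subtype]
        exact hm
      have hle : Submodule.span (ZMod 2) (Set.range w)
          ≤ (Submodule.span ExtR (Set.range w)).restrictScalars (ZMod 2) :=
        Submodule.span_le.mpr (fun y hy => Submodule.subset_span hy)
      exact hle hmF2
    have hspan : ⊤ ≤ Submodule.span ExtR (Set.range w) := by
      intro m _
      have htop : K ⊔ W = ⊤ := hW.codisjoint.eq_top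
      obtain ⟨k, hk, ww, hww, hsum2⟩ := Submodule.mem_sup.mp
        (htop ▸ Submodule.mem_top : m ∈ K ⊔ W)
      have hkr : k ∈ LinearMap.range (mulX M) := by
        rw [← h]; exact (Submodule.restrictScalars_mem _ _ _).mp hk
      obtain ⟨n, hn⟩ := hkr
      obtain ⟨k', hk', w', hw', hn2⟩ := Submodule.mem_sup.mp
        (htop ▸ Submodule.mem_top : n ∈ K ⊔ W)
      have hkxw : k = xcl • w' := by
        rw [← hn, hmulX, ← hn2, smul_add, (hmemK k').mp hk', zero_add]
      rw [← hsum2, hkxw]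
      exact Submodule.add_mem _
        (Submodule.smul_mem _ _ (hWle w' hw')) (hWle ww hww)
    exact Module.Free.of_basis (Module.Basis.mk hli hspan)
end
end

section
/- (Free, projective and injective modules coincide over the exterior algebra on one generator, an instance of the Frobenius property of finite dimensional Hopf algebras.) For any R-module M, the following are equivalent: (i) M is a projective R-module; (ii) M is an injective R-module; (iii) M is a free R-module. -/
noncomputable section

open Polynomial

def xx : ExtR := AdjoinRoot.root _

lemma xx_sq : xx * xx = 0 := by
  have h := AdjoinRoot.mk_self (f := (X ^ 2 : (ZMod 2)[X]))
  rw [map_pow, AdjoinRoot.mk_X] at h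
  simpa [pow_two, xx] using h

lemma xx_ne_zero : xx ≠ 0 := by
  rw [xx, ← AdjoinRoot.mk_X, Ne, AdjoinRoot.mk_eq_zero]
  intro h
  have := Polynomial.natDegree_le_of_dvd h (by simp : (X : (ZMod 2)[X]) ≠ 0)
  simp at this

lemma two_eq_zero : (2 : ExtR) = 0 := by
  have h2 : ((2 : ZMod 2) : _) = algebraMap (ZMod 2) ExtR 2 := rfl
  have : algebraMap (ZMod 2) ExtR 2 = 2 := by push_cast at h2 ⊢; exact map_ofNat _ 2
  rw [← this, show (2 : ZMod 2) = 0 by decide, map_zero]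

lemma repr_cd (a : ExtR) : ∃ c d : ZMod 2,
    a = algebraMap (ZMod 2) ExtR c + algebraMap (ZMod 2) ExtR d * xx := by
  induction a using AdjoinRoot.induction_on with
  | ih p =>
    have hmonic : (X ^ 2 : (ZMod 2)[X]).Monic := monic_X_pow 2
    have hdecomp := Polynomial.modByMonic_add_div p (X ^ 2)
    set r := p %ₘ (X ^ 2) with hr
    have hdeg : r.degree < 2 := by
      have := Polynomial.degree_modByMonic_lt p hmonic
      simpa using this
    have hdeg1 : r.degree ≤ 1 := by
      by_contra h
      push_neg at h
      have h2 : (1 : WithBot ℕ) + 1 ≤ r.degree := Nat.WithBot.add_one_le_of_lt h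
      have : (2 : WithBot ℕ) ≤ r.degree := by
        have e : (2 : WithBot ℕ) = 1 + 1 := by norm_num
        rw [e]; exact h2
      exact absurd (lt_of_le_of_lt this hdeg) (lt_irrefl _)
    have hrform := Polynomial.eq_X_add_C_of_degree_le_one hdeg1
    refine ⟨r.coeff 0, r.coeff 1, ?_⟩
    have : AdjoinRoot.mk (X ^ 2) p = AdjoinRoot.mk (X ^ 2) r := by
      conv_lhs => rw [← hdecomp]
      rw [map_add, map_mul, AdjoinRoot.mk_self, zero_mul, add_zero]
    rw [this]
    conv_lhs => rw [hrform]
    rw [map_add, map_mul, AdjoinRoot.mk_X, AdjoinRoot.mk_C, AdjoinRoot.mk_C]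
    rw [add_comm, AdjoinRoot.algebraMap_eq]
    rfl

lemma classify (a : ExtR) : a = 0 ∨ a = 1 ∨ a = xx ∨ a = 1 + xx := by
  obtain ⟨c, d, rfl⟩ := repr_cd a
  have hc : c = 0 ∨ c = 1 := by revert c; decide
  have hd : d = 0 ∨ d = 1 := by revert d; decide
  rcases hc with rfl | rfl <;> rcases hd with rfl | rfl <;>
    simp [map_zero, map_one]

lemma ext_one_ne_zero : (1 : ExtR) ≠ 0 := by
  have : AdjoinRoot.mk (X ^ 2 : (ZMod 2)[X]) 1 = (1 : ExtR) := map_one _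
  rw [← this, Ne, AdjoinRoot.mk_eq_zero]
  intro h
  have := Polynomial.natDegree_le_of_dvd h (by norm_num : (1 : (ZMod 2)[X]) ≠ 0)
  simp at this

lemma one_add_xx_ne_zero : (1 : ExtR) + xx ≠ 0 := by
  intro h
  have hx : xx = -1 := by linear_combination h
  have : (0 : ExtR) = 1 := by
    calc (0 : ExtR) = xx * xx := xx_sq.symm
    _ = (-1) * (-1) := by rw [hx]
    _ = 1 := by ring
  exact ext_one_ne_zero this.symm

lemma add_self (a : ExtR) : a + a = 0 := by
  have : a + a = 2 * a := by ring
  rw [this, two_eq_zero, zero_mul]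

lemma xx_mul_eq_zero {a : ExtR} (h : xx * a = 0) : a = 0 ∨ a = xx := by
  rcases classify a with rfl | rfl | rfl | rfl
  · left; rfl
  · rw [mul_one] at h; exact absurd h xx_ne_zero
  · right; rfl
  · rw [mul_add, mul_one, xx_sq, add_zero] at h; exact absurd h xx_ne_zero

lemma mem_span_xx {a : ExtR} : a ∈ Ideal.span {xx} ↔ (a = 0 ∨ a = xx) := by
  rw [Ideal.mem_span_singleton]
  constructor
  · rintro ⟨b, rfl⟩
    rcases classify b with rfl | rfl | rfl | rfl
    · left; rw [mul_zero]
    · right; rw [mul_one]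
    · left; exact xx_sq
    · right; rw [mul_add, mul_one, xx_sq, add_zero]
  · rintro (rfl | rfl)
    · exact dvd_zero _
    · exact dvd_rfl

lemma isUnit_of_not_mem_span {a : ExtR} (h : a ∉ Ideal.span {xx}) : IsUnit a := by
  rcases classify a with rfl | rfl | rfl | rfl
  · exact absurd (mem_span_xx.mpr (Or.inl rfl)) h
  · exact isUnit_one
  · exact absurd (mem_span_xx.mpr (Or.inr rfl)) h
  · refine IsUnit.of_mul_eq_one (1 + xx) ?_
    have : (1 + xx) * (1 + xx) = 1 + (xx + xx) + xx * xx := by ring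
    rw [this, add_self, xx_sq, add_zero, add_zero]

section Mod
variable {M : Type} [AddCommGroup M] [Module ExtR M]

def Cond (M : Type) [AddCommGroup M] [Module ExtR M] : Prop :=
  ∀ m : M, xx • m = 0 → ∃ m', m = xx • m'

lemma cond_baer (h : Cond M) : Module.Baer ExtR M := by
  intro I g
  by_cases htop : ∃ a ∈ I, a ∉ Ideal.span {xx}
  · obtain ⟨a, haI, ha⟩ := htop
    have hI : I = ⊤ := Ideal.eq_top_of_isUnit_mem I haI (isUnit_of_not_mem_span ha)
    refine ⟨g.comp (LinearMap.codRestrict (I : Submodule ExtR ExtR) LinearMap.id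
      (fun y => by rw [hI]; trivial)), fun y hy => ?_⟩
    rfl
  · push_neg at htop
    by_cases hx : xx ∈ I
    · set m := g ⟨xx, hx⟩ with hm
      have hxm : xx • m = 0 := by
        rw [hm, ← map_smul]
        have : (xx • (⟨xx, hx⟩ : I)) = (0 : I) := by
          ext
          simp [smul_eq_mul, xx_sq]
        rw [this, map_zero]
      obtain ⟨m', hm'⟩ := h m hxm
      refine ⟨LinearMap.toSpanSingleton ExtR M m', fun y hy => ?_⟩
      rcases mem_span_xx.mp (htop y hy) with h0 | h0
      · subst h0
        have : (⟨(0:ExtR), hy⟩ : I) = 0 := rfl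
        rw [this, map_zero, map_zero]
      · subst h0
        have : (⟨xx, hy⟩ : I) = ⟨xx, hx⟩ := rfl
        rw [this, ← hm, LinearMap.toSpanSingleton_apply, ← hm', hm']
    · refine ⟨0, fun y hy => ?_⟩
      rcases mem_span_xx.mp (htop y hy) with h0 | h0
      · subst h0
        have : (⟨(0:ExtR), hy⟩ : I) = 0 := rfl
        rw [this, map_zero, map_zero]
      · exact absurd (h0 ▸ hy) hx

lemma injective_cond (inj : Module.Injective ExtR M) : Cond M := by
  intro m hm
  set φ : ExtR →ₗ[ExtR] ExtR := LinearMap.toSpanSingleton ExtR ExtR xx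
  set ψ : ExtR →ₗ[ExtR] M := LinearMap.toSpanSingleton ExtR M m
  have hker : LinearMap.ker φ ≤ LinearMap.ker ψ := by
    intro r hr
    rw [LinearMap.mem_ker] at hr ⊢
    have hr' : r * xx = 0 := hr
    have : xx * r = 0 := by rw [mul_comm]; exact hr'
    rcases xx_mul_eq_zero this with rfl | rfl
    · simp [ψ]
    · show xx • m = 0
      exact hm
  set i : (ExtR ⧸ LinearMap.ker φ) →ₗ[ExtR] ExtR := Submodule.liftQ _ φ le_rfl
  have hi : Function.Injective i := by
    rw [← LinearMap.ker_eq_bot]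
    exact Submodule.ker_liftQ_eq_bot _ _ le_rfl le_rfl
  set f : (ExtR ⧸ LinearMap.ker φ) →ₗ[ExtR] M := Submodule.liftQ _ ψ hker
  obtain ⟨hmap, hcomm⟩ := inj.out i hi f
  refine ⟨hmap 1, ?_⟩
  have h1 : i (Submodule.Quotient.mk 1) = xx := by
    rw [show i (Submodule.Quotient.mk 1) = φ 1 from Submodule.liftQ_apply _ _ _]
    exact one_smul _ _
  have h2 : f (Submodule.Quotient.mk 1) = m := by
    rw [show f (Submodule.Quotient.mk 1) = ψ 1 from Submodule.liftQ_apply _ _ _]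
    exact one_smul _ _
  have := hcomm (Submodule.Quotient.mk 1)
  rw [h1, h2] at this
  rw [← this, ← map_smul, smul_eq_mul, mul_one]

end Mod

section Mod2
variable {M : Type} [AddCommGroup M] [Module ExtR M]

open Classical in
lemma projective_cond (hp : Module.Projective ExtR M) : Cond M := by
  obtain ⟨s, hs⟩ := Module.projective_def.mp hp
  intro m hm
  set π : (M →₀ ExtR) →ₗ[ExtR] M := Finsupp.linearCombination ExtR id
  -- divide function on ExtR
  set dv : ExtR → ExtR := fun a => if a = 0 then 0 else if a = xx then 1 else 0 with hdv
  have hdvmul : ∀ a : ExtR, xx * a = 0 → xx * dv a = a := by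
    intro a ha
    rcases xx_mul_eq_zero ha with rfl | rfl
    · simp [hdv]
    · by_cases h0 : xx = (0 : ExtR)
      · exact absurd h0 xx_ne_zero
      · simp [hdv, h0, mul_one]
  have hsm : xx • s m = 0 := by rw [← map_smul, hm, map_zero]
  set t : M →₀ ExtR := Finsupp.mapRange dv (by simp [hdv]) (s m) with ht
  have hxt : xx • t = s m := by
    ext j
    rw [Finsupp.smul_apply, ht, Finsupp.mapRange_apply, smul_eq_mul]
    apply hdvmul
    have := congrArg (fun (u : M →₀ ExtR) => u j) hsm
    simpa [Finsupp.smul_apply, smul_eq_mul] using this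
  refine ⟨π t, ?_⟩
  calc m = π (s m) := (hs m).symm
    _ = π (xx • t) := by rw [hxt]
    _ = xx • π t := map_smul _ _ _

end Mod2

section Free
variable {M : Type} [AddCommGroup M] [Module ExtR M]

open Classical in
lemma cond_free (h : Cond M) : Module.Free ExtR M := by
  letI : Module (ZMod 2) M := Module.compHom M (algebraMap (ZMod 2) ExtR)
  haveI : IsScalarTower (ZMod 2) ExtR M := ⟨fun c r m => by
    show (c • r) • m = algebraMap (ZMod 2) ExtR c • (r • m)
    rw [Algebra.smul_def, mul_smul]⟩
  set ℓ : M →ₗ[ZMod 2] M :=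
    { toFun := fun m => xx • m
      map_add' := fun a b => smul_add _ _ _
      map_smul' := fun c m => by
        show xx • (algebraMap (ZMod 2) ExtR c • m) = algebraMap (ZMod 2) ExtR c • (xx • m)
        rw [smul_smul, smul_smul, mul_comm] } with hℓ
  set K := LinearMap.ker ℓ with hKdef
  obtain ⟨V, hc⟩ := Submodule.exists_isCompl K
  set b := Module.Basis.ofVectorSpace (ZMod 2) V with hb
  set v : Module.Basis.ofVectorSpaceIndex (ZMod 2) V → M := fun i => (b i : M) with hv
  have hmemV : ∀ i, v i ∈ V := fun i => (b i).2
  have hKmem : ∀ m : M, m ∈ K ↔ xx • m = 0 := fun m => Iff.rfl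
  have hliZ : LinearIndependent (ZMod 2) v := by
    have := b.linearIndependent
    exact this.map' V.subtype (Submodule.ker_subtype V)
  have hVsub : ∀ p : M, p ∈ V → p ∈ Submodule.span ExtR (Set.range v) := by
    intro p hp
    have h1 : (⟨p, hp⟩ : V) ∈ Submodule.span (ZMod 2) (Set.range b) := by
      rw [b.span_eq]; trivial
    have h2 : p ∈ Submodule.span (ZMod 2) (V.subtype '' Set.range b) := by
      rw [← Submodule.map_span]
      exact ⟨⟨p, hp⟩, h1, rfl⟩
    have h3 : V.subtype '' Set.range ⇑b = Set.range v := by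
      rw [← Set.range_comp]; rfl
    rw [h3] at h2
    exact Submodule.span_subset_span (ZMod 2) ExtR _ h2
  choose cf df hcf using repr_cd
  have gsplit : ∀ (a : ExtR) (m : M), a • m = cf a • m + df a • (xx • m) := by
    intro a m
    conv_lhs => rw [hcf a]
    rw [add_smul, mul_smul, algebraMap_smul, algebraMap_smul]
  have hli : LinearIndependent ExtR v := by
    rw [linearIndependent_iff']
    intro s g hsum i hi
    have hsplit : ∑ j ∈ s, g j • v j
        = (∑ j ∈ s, cf (g j) • v j) + xx • (∑ j ∈ s, df (g j) • v j) := by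
      rw [Finset.smul_sum, ← Finset.sum_add_distrib]
      refine Finset.sum_congr rfl fun j _ => ?_
      rw [gsplit (g j) (v j)]
      congr 1
      rw [smul_comm]
    set P := ∑ j ∈ s, cf (g j) • v j with hP
    set Q := ∑ j ∈ s, df (g j) • v j with hQ
    have hPV : P ∈ V := Submodule.sum_mem V fun j _ => Submodule.smul_mem V _ (hmemV j)
    have hQV : Q ∈ V := Submodule.sum_mem V fun j _ => Submodule.smul_mem V _ (hmemV j)
    have hsum' : P + xx • Q = 0 := by rw [← hsplit]; exact hsum
    have hxQK : xx • Q ∈ K := by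
      rw [hKmem, smul_smul, xx_sq, zero_smul]
    have hPK : P ∈ K := by
      have hPeq : P = -(xx • Q) := eq_neg_of_add_eq_zero_left hsum'
      rw [hPeq]
      exact K.neg_mem hxQK
    have hP0 : P = 0 := (Submodule.disjoint_def.mp hc.disjoint) P hPK hPV
    have hxQ0 : xx • Q = 0 := by rw [hP0, zero_add] at hsum'; exact hsum'
    have hQK : Q ∈ K := by rw [hKmem]; exact hxQ0
    have hQ0 : Q = 0 := (Submodule.disjoint_def.mp hc.disjoint) Q hQK hQV
    have hc0 : cf (g i) = 0 :=
      (linearIndependent_iff'.mp hliZ) s (fun j => cf (g j)) hP0 i hi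
    have hd0 : df (g i) = 0 :=
      (linearIndependent_iff'.mp hliZ) s (fun j => df (g j)) hQ0 i hi
    rw [hcf (g i), hc0, hd0]
    simp
  have hspan : ⊤ ≤ Submodule.span ExtR (Set.range v) := by
    intro m _
    have hm : m ∈ K ⊔ V := by
      rw [codisjoint_iff.mp hc.codisjoint]; trivial
    obtain ⟨k, hk, p, hp, rfl⟩ := Submodule.mem_sup.mp hm
    obtain ⟨k', hk'⟩ := h k ((hKmem k).mp hk)
    have hm2 : k' ∈ K ⊔ V := by
      rw [codisjoint_iff.mp hc.codisjoint]; trivial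
    obtain ⟨k'', hk'', p', hp', hkp⟩ := Submodule.mem_sup.mp hm2
    have hkeq : k = xx • p' := by
      rw [hk', ← hkp, smul_add, (hKmem k'').mp hk'', zero_add]
    refine Submodule.add_mem _ ?_ (hVsub p hp)
    rw [hkeq]
    exact Submodule.smul_mem _ _ (hVsub p' hp')
  exact Module.Free.of_basis (Module.Basis.mk hli hspan)

end Free

/-- Over `R = 𝔽₂[X]/(X²)` (a Frobenius algebra), projective, injective and free
modules coincide. -/
theorem projective_iff_injective_iff_free (M : Type) [AddCommGroup M] [Module ExtR M] :
    (Module.Projective ExtR M ↔ Module.Injective ExtR M) ∧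
    (Module.Injective ExtR M ↔ Module.Free ExtR M) := by
  have h1 : Module.Projective ExtR M → Module.Injective ExtR M :=
    fun hp => (cond_baer (projective_cond hp)).injective
  have h2 : Module.Injective ExtR M → Module.Free ExtR M :=
    fun hi => cond_free (injective_cond hi)
  have h3 : Module.Free ExtR M → Module.Projective ExtR M :=
    fun hf => @Module.Projective.of_free ExtR _ M _ _ hf
  exact ⟨⟨h1, fun hi => h3 (h2 hi)⟩, ⟨h2, fun hf => h1 (h3 hf)⟩⟩
end
end

section
/- (The generic point of the spectrum of the stable module category of 𝒜(1): algebraic content.) The polynomial α² + v₀²β is irreducible in the polynomial ring 𝔽₂[v₀, α, β]; consequently, in the ring R = 𝔽₂[v₀, η, α, β]/(v₀η, η³, ηα, α² + v₀²β), the ideal (η) generated by the class of η is a prime ideal, and it equals the nilradical of R. -/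
noncomputable section

open MvPolynomial

/-- The relations ideal `(v₀η, η³, ηα, α² + v₀²β)` defining `H^{*,*}(𝒜(1))`,
with variables `0 ↦ v₀`, `1 ↦ η`, `2 ↦ α`, `3 ↦ β`. -/
abbrev relA1 : Ideal (MvPolynomial (Fin 4) (ZMod 2)) :=
  Ideal.span {X 0 * X 1, X 1 ^ 3, X 1 * X 2, X 2 ^ 2 + X 0 ^ 2 * X 3}

/-- The cohomology ring `H^{*,*}(𝒜(1)) = 𝔽₂[v₀, η, α, β]/(v₀η, η³, ηα, α² + v₀²β)`. -/
abbrev CohA1 : Type := MvPolynomial (Fin 4) (ZMod 2) ⧸ relA1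

namespace A1Aux

/-- `X0² X1` is not a square in `𝔽₂[X0,X1]`. -/
lemma not_square (r : MvPolynomial (Fin 2) (ZMod 2)) :
    r ^ 2 ≠ X 0 ^ 2 * X 1 := by
  intro h
  have := congrArg (MvPolynomial.aeval
    (fun i : Fin 2 => if i = 0 then (1 : Polynomial (ZMod 2)) else Polynomial.X)) h
  simp only [map_pow, map_mul, MvPolynomial.aeval_X] at this
  norm_num at this
  have hdeg := congrArg Polynomial.natDegree this
  rw [Polynomial.natDegree_pow, Polynomial.natDegree_X] at hdeg
  omega

/-- `Y² + X0² X1` is irreducible over `𝔽₂[X0,X1]`. -/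
lemma irred_poly :
    Irreducible (Polynomial.X ^ 2 +
      Polynomial.C (X 0 ^ 2 * X 1 : MvPolynomial (Fin 2) (ZMod 2))) := by
  set c : MvPolynomial (Fin 2) (ZMod 2) := X 0 ^ 2 * X 1 with hc
  by_contra h
  have hm : (Polynomial.X ^ 2 + Polynomial.C c).Monic :=
    Polynomial.monic_X_pow_add_C _ two_ne_zero
  have hnd : (Polynomial.X ^ 2 + Polynomial.C c).natDegree = 2 :=
    Polynomial.natDegree_X_pow_add_C
  obtain ⟨c₁, c₂, h0, h1⟩ := (hm.not_irreducible_iff_exists_add_mul_eq_coeff hnd).mp h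
  rw [Polynomial.coeff_add, Polynomial.coeff_X_pow, Polynomial.coeff_C] at h0 h1
  norm_num at h0 h1
  have hc2 : c₂ = c₁ := by
    have := eq_neg_of_add_eq_zero_left h1.symm
    rw [CharTwo.neg_eq] at this
    exact this.symm
  rw [hc2, ← sq] at h0
  exact not_square c₁ h0.symm

/-- The equivalence `𝔽₂[X0,X1,X2] ≃ 𝔽₂[X0,X1][Y]` sending `X1 ↦ Y`, `X0 ↦ X0`, `X2 ↦ X1`. -/
def e3 : MvPolynomial (Fin 3) (ZMod 2) ≃ₐ[ZMod 2]
    Polynomial (MvPolynomial (Fin 2) (ZMod 2)) :=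
  (renameEquiv (ZMod 2) (Equiv.swap (0 : Fin 3) 1)).trans (finSuccEquiv (ZMod 2) 2)

lemma e3_apply :
    e3 (X 1 ^ 2 + X 0 ^ 2 * X 2) =
      Polynomial.X ^ 2 + Polynomial.C (X 0 ^ 2 * X 1 : MvPolynomial (Fin 2) (ZMod 2)) := by
  have h1 : (1 : Fin 3) = Fin.succ 0 := rfl
  have h2 : (2 : Fin 3) = Fin.succ 1 := rfl
  simp only [e3, AlgEquiv.trans_apply, map_add, map_pow, map_mul, renameEquiv_apply, rename_X]
  rw [show Equiv.swap (0 : Fin 3) 1 1 = 0 from rfl, show Equiv.swap (0 : Fin 3) 1 0 = 1 from rfl,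
    show Equiv.swap (0 : Fin 3) 1 2 = 2 from rfl, h1, h2, finSuccEquiv_X_zero,
    finSuccEquiv_X_succ, finSuccEquiv_X_succ]

lemma irred3 : Irreducible (X 1 ^ 2 + X 0 ^ 2 * X 2 : MvPolynomial (Fin 3) (ZMod 2)) := by
  have := irred_poly
  rw [← e3_apply] at this
  exact (MulEquiv.irreducible_iff (e3 : MvPolynomial (Fin 3) (ZMod 2) ≃*
    Polynomial (MvPolynomial (Fin 2) (ZMod 2)))).mp this

/-- `g₃ := X1² + X0² X2` in three variables. -/
abbrev g3 : MvPolynomial (Fin 3) (ZMod 2) := X 1 ^ 2 + X 0 ^ 2 * X 2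

lemma prime_span_g3 : (Ideal.span ({g3} : Set (MvPolynomial (Fin 3) (ZMod 2)))).IsPrime := by
  rw [Ideal.span_singleton_prime irred3.ne_zero]
  exact (UniqueFactorizationMonoid.irreducible_iff_prime).mp irred3

/-- The ideal `(Y, C g₃)` in `𝔽₂[X0,X1,X2][Y]` is prime. -/
lemma prime_L :
    (Ideal.span ({Polynomial.X, Polynomial.C g3} :
      Set (Polynomial (MvPolynomial (Fin 3) (ZMod 2))))).IsPrime := by
  haveI := prime_span_g3
  set I : Ideal (MvPolynomial (Fin 3) (ZMod 2)) := Ideal.span {g3}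
  set ψ : Polynomial (MvPolynomial (Fin 3) (ZMod 2)) →+* (MvPolynomial (Fin 3) (ZMod 2)) ⧸ I :=
    (Ideal.Quotient.mk I).comp (Polynomial.evalRingHom 0)
  have hker : RingHom.ker ψ =
      Ideal.span {Polynomial.X, Polynomial.C g3} := by
    have hsurj : Function.Surjective (Polynomial.evalRingHom
        (0 : MvPolynomial (Fin 3) (ZMod 2))) := fun b => ⟨Polynomial.C b, by simp⟩
    have : RingHom.ker ψ = Ideal.comap (Polynomial.evalRingHom 0) I := by
      ext x
      simp [ψ, RingHom.mem_ker, Ideal.Quotient.eq_zero_iff_mem, Ideal.mem_comap]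
    rw [this]
    have hmap : I = Ideal.map (Polynomial.evalRingHom
        (0 : MvPolynomial (Fin 3) (ZMod 2))) (Ideal.span {Polynomial.C g3}) := by
      rw [Ideal.map_span, Set.image_singleton]
      simp
      rfl
    rw [hmap, Ideal.comap_map_of_surjective _ hsurj]
    rw [← RingHom.ker_eq_comap_bot, Polynomial.ker_evalRingHom]
    rw [show ({Polynomial.X, Polynomial.C g3} :
        Set (Polynomial (MvPolynomial (Fin 3) (ZMod 2)))) = {Polynomial.X} ∪ {Polynomial.C g3}
      from rfl, Ideal.span_union]
    simp [sup_comm]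
  rw [← hker]
  exact RingHom.ker_isPrime ψ

/-- The equivalence `𝔽₂[X0..X3] ≃ 𝔽₂[X0,X1,X2][Y]` sending `X1 ↦ Y`, `X0 ↦ X0`,
`X2 ↦ X1`, `X3 ↦ X2`. -/
def e4 : MvPolynomial (Fin 4) (ZMod 2) ≃ₐ[ZMod 2]
    Polynomial (MvPolynomial (Fin 3) (ZMod 2)) :=
  (renameEquiv (ZMod 2) (Equiv.swap (0 : Fin 4) 1)).trans (finSuccEquiv (ZMod 2) 3)

lemma e4_X1 : e4 (X 1) = Polynomial.X := by
  simp only [e4, AlgEquiv.trans_apply, renameEquiv_apply, rename_X]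
  rw [show Equiv.swap (0 : Fin 4) 1 1 = 0 from rfl, finSuccEquiv_X_zero]

lemma e4_g : e4 (X 2 ^ 2 + X 0 ^ 2 * X 3) = Polynomial.C g3 := by
  have h1 : (1 : Fin 4) = Fin.succ 0 := rfl
  have h2 : (2 : Fin 4) = Fin.succ 1 := rfl
  have h3 : (3 : Fin 4) = Fin.succ 2 := rfl
  simp only [e4, AlgEquiv.trans_apply, map_add, map_pow, map_mul, renameEquiv_apply, rename_X]
  rw [show Equiv.swap (0 : Fin 4) 1 0 = 1 from rfl, show Equiv.swap (0 : Fin 4) 1 2 = 2 from rfl,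
    show Equiv.swap (0 : Fin 4) 1 3 = 3 from rfl, h1, h2, h3,
    finSuccEquiv_X_succ, finSuccEquiv_X_succ, finSuccEquiv_X_succ]

/-- The ideal `(X1, X2² + X0² X3)` in `𝔽₂[X0..X3]` is prime. -/
lemma prime_I' :
    (Ideal.span ({X 1, X 2 ^ 2 + X 0 ^ 2 * X 3} :
      Set (MvPolynomial (Fin 4) (ZMod 2)))).IsPrime := by
  have hmap : Ideal.map (e4 : MvPolynomial (Fin 4) (ZMod 2) →+*
        Polynomial (MvPolynomial (Fin 3) (ZMod 2)))
      (Ideal.span {X 1, X 2 ^ 2 + X 0 ^ 2 * X 3}) =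
      Ideal.span {Polynomial.X, Polynomial.C g3} := by
    rw [Ideal.map_span]
    congr 1
    rw [Set.image_insert_eq, Set.image_singleton]
    simp only [RingHom.coe_coe, e4_X1, e4_g]
  have heq : Ideal.span ({X 1, X 2 ^ 2 + X 0 ^ 2 * X 3} :
      Set (MvPolynomial (Fin 4) (ZMod 2))) =
      Ideal.comap (e4 : MvPolynomial (Fin 4) (ZMod 2) →+*
        Polynomial (MvPolynomial (Fin 3) (ZMod 2)))
      (Ideal.span {Polynomial.X, Polynomial.C g3}) := by
    rw [← hmap,
      Ideal.comap_map_of_bijective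
        (e4 : MvPolynomial (Fin 4) (ZMod 2) →+* Polynomial (MvPolynomial (Fin 3) (ZMod 2)))
        e4.bijective]
  rw [heq]
  haveI := prime_L
  exact Ideal.IsPrime.comap _

end A1Aux

open A1Aux in
/-- `α² + v₀²β` is irreducible in `𝔽₂[v₀, α, β]` (variables `0 ↦ v₀`, `1 ↦ α`, `2 ↦ β`);
consequently, in `R = 𝔽₂[v₀, η, α, β]/(v₀η, η³, ηα, α² + v₀²β)` the ideal `(η)` is
prime, and it equals the nilradical of `R`. -/
theorem a1_eta_prime_and_nilradical :
    Irreducible (X 1 ^ 2 + X 0 ^ 2 * X 2 : MvPolynomial (Fin 3) (ZMod 2)) ∧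
    (Ideal.span {Ideal.Quotient.mk relA1 (X 1)} : Ideal CohA1).IsPrime ∧
    (Ideal.span {Ideal.Quotient.mk relA1 (X 1)} : Ideal CohA1) = nilradical CohA1 := by
  have hgmem : (X 2 ^ 2 + X 0 ^ 2 * X 3 : MvPolynomial (Fin 4) (ZMod 2)) ∈ relA1 :=
    Ideal.subset_span (by simp)
  have hkerle : RingHom.ker (Ideal.Quotient.mk relA1) ≤
      Ideal.span ({X 1, X 2 ^ 2 + X 0 ^ 2 * X 3} : Set (MvPolynomial (Fin 4) (ZMod 2))) := by
    rw [Ideal.mk_ker]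
    rw [Ideal.span_le]
    have hX1 : (X 1 : MvPolynomial (Fin 4) (ZMod 2)) ∈
        Ideal.span ({X 1, X 2 ^ 2 + X 0 ^ 2 * X 3} : Set (MvPolynomial (Fin 4) (ZMod 2))) :=
      Ideal.subset_span (by simp)
    intro x hx
    simp only [Set.mem_insert_iff, Set.mem_singleton_iff] at hx
    rcases hx with rfl | rfl | rfl | rfl
    · exact Ideal.mul_mem_left _ _ hX1
    · exact pow_succ (X 1 : MvPolynomial (Fin 4) (ZMod 2)) 2 ▸ Ideal.mul_mem_left _ _ hX1
    · exact Ideal.mul_mem_right _ _ hX1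
    · exact Ideal.subset_span (by simp)
  have hJmap : (Ideal.span {Ideal.Quotient.mk relA1 (X 1)} : Ideal CohA1) =
      Ideal.map (Ideal.Quotient.mk relA1)
        (Ideal.span ({X 1, X 2 ^ 2 + X 0 ^ 2 * X 3} : Set (MvPolynomial (Fin 4) (ZMod 2)))) := by
    rw [Ideal.map_span, Set.image_insert_eq, Set.image_singleton]
    rw [show Ideal.Quotient.mk relA1 (X 2 ^ 2 + X 0 ^ 2 * X 3) = 0 from
      (Ideal.Quotient.eq_zero_iff_mem).mpr hgmem]
    refine le_antisymm (Ideal.span_mono ?_) (Ideal.span_le.mpr ?_)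
    · intro x hx
      simp only [Set.mem_singleton_iff] at hx
      subst hx
      exact Set.mem_insert _ _
    · intro x hx
      rcases hx with rfl | hx
      · exact Ideal.subset_span (Set.mem_singleton _)
      · rw [Set.mem_singleton_iff] at hx
        subst hx
        exact Submodule.zero_mem _
  have hprime : (Ideal.span {Ideal.Quotient.mk relA1 (X 1)} : Ideal CohA1).IsPrime := by
    rw [hJmap]
    haveI := prime_I'
    exact Ideal.map_isPrime_of_surjective Ideal.Quotient.mk_surjective hkerle
  refine ⟨irred3, hprime, ?_⟩
  apply le_antisymm
  · rw [Ideal.span_le]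
    intro x hx
    simp only [Set.mem_singleton_iff] at hx
    subst hx
    rw [SetLike.mem_coe, mem_nilradical]
    refine ⟨3, ?_⟩
    rw [← map_pow, Ideal.Quotient.eq_zero_iff_mem]
    exact Ideal.subset_span (by simp)
  · haveI := hprime
    exact nilradical_le_prime _
end
end

section
/- (The spectrum of the stable module category of 𝒜(1) has exactly three points: algebraic content.) Equip R = 𝔽₂[v₀, η, α, β]/(v₀η, η³, ηα, α² + v₀²β) with the ℕ×ℕ-grading determined by deg v₀ = (1,1), deg η = (1,2), deg α = (3,7), deg β = (4,12) (all four relations are bihomogeneous, so this grading descends to R). Then the set of prime ideals of R that are homogeneous with respect to this grading and do not contain the irrelevant ideal (v₀, η, α, β) is exactly { (η), (η, v₀, α), (η, α, β) }, where (η, v₀, α) is the radical of the ideal (η, v₀). In particular there are exactly three such primes, and (η) is contained in both of the others. -/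
noncomputable section

open MvPolynomial

/-- The bidegrees of the generators: `v₀ ↦ (1,1)`, `η ↦ (1,2)`, `α ↦ (3,7)`,
`β ↦ (4,12)`. -/
abbrev bideg : Fin 4 → ℕ × ℕ := ![(1, 1), (1, 2), (3, 7), (4, 12)]

/-- The image in `CohA1` of a polynomial. -/
abbrev clA1 (p : MvPolynomial (Fin 4) (ZMod 2)) : CohA1 := Ideal.Quotient.mk relA1 p

/-- An ideal of `CohA1` is (bi)homogeneous if it contains the classes of all the
bihomogeneous components (for the `ℕ×ℕ`-grading determined by `bideg`) of every
polynomial whose class it contains. -/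
def IsBihomogeneous (J : Ideal CohA1) : Prop :=
  ∀ g : MvPolynomial (Fin 4) (ZMod 2), clA1 g ∈ J →
    ∀ n : ℕ × ℕ, clA1 (weightedHomogeneousComponent bideg n g) ∈ J

/-- The irrelevant ideal `(v₀, η, α, β)` of `CohA1`. -/
abbrev irrelevantA1 : Ideal CohA1 :=
  Ideal.span {clA1 (X 0), clA1 (X 1), clA1 (X 2), clA1 (X 3)}

namespace SpcA1

abbrev A : Type := MvPolynomial (Fin 4) (ZMod 2)

def fA : A := X 2 ^ 2 + X 0 ^ 2 * X 3

instance : CharP A 2 := by infer_instance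

example : IsDomain A := by infer_instance

lemma weight_bideg (m : Fin 4 →₀ ℕ) :
    Finsupp.weight bideg m =
      (m 0 + m 1 + 3 * m 2 + 4 * m 3, m 0 + 2 * m 1 + 7 * m 2 + 12 * m 3) := by
  rw [Finsupp.weight_apply, Finsupp.sum_fintype]
  · simp [Fin.sum_univ_four, bideg, Prod.ext_iff]
    constructor <;> ring
  · intro i; simp

lemma hfA_hom : fA.IsWeightedHomogeneous bideg (6, 14) := by
  have h1 : ((X 2 : A) ^ 2).IsWeightedHomogeneous bideg (6, 14) := by
    have := (isWeightedHomogeneous_X (R := ZMod 2) bideg 2).mul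
      (isWeightedHomogeneous_X (R := ZMod 2) bideg 2)
    rw [← pow_two] at this
    convert this using 2 <;> simp [bideg]
  have h2 : ((X 0 : A) ^ 2 * X 3).IsWeightedHomogeneous bideg (6, 14) := by
    have := ((isWeightedHomogeneous_X (R := ZMod 2) bideg 0).mul
      (isWeightedHomogeneous_X (R := ZMod 2) bideg 0)).mul
      (isWeightedHomogeneous_X (R := ZMod 2) bideg 3)
    rw [← pow_two] at this
    convert this using 2 <;> simp [bideg]
  exact h1.add h2

lemma whc_mul_mem {h : A} {mdeg : ℕ × ℕ} (hh : h.IsWeightedHomogeneous bideg mdeg)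
    (u : A) (n : ℕ × ℕ) :
    weightedHomogeneousComponent bideg n (u * h) ∈ Ideal.span {h} := by
  induction u using MvPolynomial.induction_on' with
  | monomial m c =>
    have hmon : ((monomial m) c * h).IsWeightedHomogeneous bideg
        (Finsupp.weight bideg m + mdeg) :=
      (isWeightedHomogeneous_monomial bideg m c rfl).mul hh
    by_cases hn : Finsupp.weight bideg m + mdeg = n
    · rw [← hn, hmon.weightedHomogeneousComponent_same]
      exact Ideal.mul_mem_left _ _ (Ideal.subset_span rfl)
    · rw [weightedHomogeneousComponent_eq_zero' _ _ (fun d hd => ?_)]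
      · exact zero_mem _
      · rw [MvPolynomial.mem_support_iff] at hd
        rw [hmon hd]; exact hn
  | add p q hp hq =>
    rw [add_mul, map_add]
    exact add_mem hp hq

lemma coeff_aeval_ite (s : Set (Fin 4)) [DecidablePred (· ∈ s)] (p : A) (a : Fin 4 →₀ ℕ)
    (ha : ∀ i ∈ s, a i = 0) :
    coeff a (aeval (fun i => if i ∈ s then (0 : A) else X i) p) = coeff a p := by
  induction p using MvPolynomial.induction_on' with
  | monomial m c =>
    rw [aeval_monomial]
    by_cases hm : ∀ i ∈ s, m i = 0
    · have hprod : (m.prod fun i k => (if i ∈ s then (0 : A) else X i) ^ k) =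
          m.prod fun i k => X i ^ k := by
        apply Finsupp.prod_congr
        intro i hi
        rw [if_neg]
        intro his
        exact (Finsupp.mem_support_iff.mp hi) (hm i his)
      rw [hprod, MvPolynomial.algebraMap_eq, ← monomial_eq]
    · push_neg at hm
      obtain ⟨i, his, hmi⟩ := hm
      have hprod : (m.prod fun i k => (if i ∈ s then (0 : A) else X i) ^ k) = 0 := by
        apply Finset.prod_eq_zero (Finsupp.mem_support_iff.mpr hmi)
        dsimp only
        rw [if_pos his]
        exact zero_pow hmi
      rw [hprod, mul_zero, MvPolynomial.coeff_zero, MvPolynomial.coeff_monomial, if_neg]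
      intro hma
      exact hmi (hma ▸ ha i his)
  | add p q hp hq =>
    rw [map_add, MvPolynomial.coeff_add, MvPolynomial.coeff_add, hp, hq]

lemma isPrime_spanX (s : Set (Fin 4)) : (Ideal.span (X '' s : Set A)).IsPrime := by
  classical
  set π : A →ₐ[ZMod 2] A := aeval (fun i => if i ∈ s then (0 : A) else X i) with hπ
  have hker : Ideal.span (X '' s : Set A) ≤ RingHom.ker π.toRingHom := by
    rw [Ideal.span_le]
    rintro _ ⟨i, his, rfl⟩
    simp [RingHom.mem_ker, π, if_pos his]
  constructor
  · intro htop
    have h1 : (1 : A) ∈ Ideal.span (X '' s : Set A) := htop ▸ Submodule.mem_top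
    rw [mem_ideal_span_X_image] at h1
    have h0 : (0 : Fin 4 →₀ ℕ) ∈ (1 : A).support := by
      rw [MvPolynomial.mem_support_iff]
      simp
    obtain ⟨i, _, hi⟩ := h1 _ h0
    simp at hi
  · intro p q hpq
    by_contra hcon
    push_neg at hcon
    obtain ⟨hp, hq⟩ := hcon
    rw [mem_ideal_span_X_image] at hp hq
    push_neg at hp hq
    obtain ⟨a, ha, has⟩ := hp
    obtain ⟨b, hb, hbs⟩ := hq
    have hπp : π p ≠ 0 := by
      intro h
      apply MvPolynomial.mem_support_iff.mp ha
      rw [← coeff_aeval_ite s p a (fun i hi => has i hi)]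
      rw [show (aeval fun i => if i ∈ s then (0:A) else X i) p = π p from rfl, h,
        MvPolynomial.coeff_zero]
    have hπq : π q ≠ 0 := by
      intro h
      apply MvPolynomial.mem_support_iff.mp hb
      rw [← coeff_aeval_ite s q b (fun i hi => hbs i hi)]
      rw [show (aeval fun i => if i ∈ s then (0:A) else X i) q = π q from rfl, h,
        MvPolynomial.coeff_zero]
    have hzero : π p * π q = 0 := by
      rw [← map_mul]
      exact hker hpq
    rcases mul_eq_zero.mp hzero with h | h
    · exact hπp h
    · exact hπq h

lemma spanX_whc (s : Set (Fin 4)) {p : A} (hp : p ∈ Ideal.span (X '' s : Set A)) (n : ℕ × ℕ) :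
    weightedHomogeneousComponent bideg n p ∈ Ideal.span (X '' s : Set A) := by
  rw [mem_ideal_span_X_image] at hp ⊢
  intro m hm
  apply hp
  rw [MvPolynomial.mem_support_iff] at hm ⊢
  rw [coeff_weightedHomogeneousComponent] at hm
  by_cases h : Finsupp.weight bideg m = n
  · rw [if_pos h] at hm; exact hm
  · rw [if_neg h] at hm; exact absurd rfl hm

def MM (a c d : ℕ) : A := X 0 ^ a * X 2 ^ c * X 3 ^ d

lemma MM_reduce : ∀ c a d : ℕ,
    MM a c d - MM (a + 2 * (c / 2)) (c % 2) (d + c / 2) ∈ Ideal.span ({fA} : Set A) := by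
  intro c
  induction c using Nat.strong_induction_on with
  | _ c ih =>
    match c with
    | 0 => intro a d; norm_num
    | 1 => intro a d; norm_num
    | (k + 2) =>
      intro a d
      have h1 : MM a (k + 2) d - MM (a + 2) k (d + 1) ∈ Ideal.span ({fA} : Set A) := by
        have he : MM a (k + 2) d - MM (a + 2) k (d + 1) =
            (X 0 ^ a * X 2 ^ k * X 3 ^ d) * (X 2 ^ 2 - X 0 ^ 2 * X 3) := by
          simp only [MM]; ring
        have hf2 : (X 2 ^ 2 - X 0 ^ 2 * X 3 : A) = fA := by
          rw [CharTwo.sub_eq_add]; rfl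
        rw [he, hf2]
        exact Ideal.mul_mem_left _ _ (Ideal.subset_span rfl)
      have h3 := ih k (by omega) (a + 2) (d + 1)
      have heq1 : (a + 2) + 2 * (k / 2) = a + 2 * ((k + 2) / 2) := by omega
      have heq2 : k % 2 = (k + 2) % 2 := by omega
      have heq3 : (d + 1) + k / 2 = d + (k + 2) / 2 := by omega
      rw [heq1, heq2, heq3] at h3
      have h4 := add_mem h1 h3
      rw [sub_add_sub_cancel] at h4
      exact h4

lemma monomial_eq_MM (m : Fin 4 →₀ ℕ) (h1 : m 1 = 0) :
    (monomial m) (1 : ZMod 2) = MM (m 0) (m 2) (m 3) := by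
  have hm : m = Finsupp.single 0 (m 0) + Finsupp.single 2 (m 2) + Finsupp.single 3 (m 3) := by
    ext i
    fin_cases i <;> simp [Finsupp.single_apply, h1] <;> rfl
  rw [hm]
  simp [MM, X_pow_eq_monomial, monomial_mul]

lemma reduced_eq {m m' : Fin 4 →₀ ℕ} (h1 : m 1 = 0) (h1' : m' 1 = 0)
    (hw : Finsupp.weight bideg m = Finsupp.weight bideg m') :
    m 0 + 2 * (m 2 / 2) = m' 0 + 2 * (m' 2 / 2) ∧ m 2 % 2 = m' 2 % 2 ∧
      m 3 + m 2 / 2 = m' 3 + m' 2 / 2 := by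
  rw [weight_bideg, weight_bideg, Prod.ext_iff] at hw
  obtain ⟨e1, e2⟩ := hw
  refine ⟨by omega, by omega, by omega⟩

def Good (q : A) : Prop := ∀ m ∈ q.support, m 1 = 0 ∧ m 2 = 0

lemma Good_zero : Good 0 := by intro m hm; simp at hm

lemma Good_add {p q : A} (hp : Good p) (hq : Good q) : Good (p + q) := by
  intro m hm
  rcases Finset.mem_union.mp (MvPolynomial.support_add hm) with h | h
  · exact hp m h
  · exact hq m h

lemma MM_zero_eq (a d : ℕ) :
    MM a 0 d = (monomial (Finsupp.single 0 a + Finsupp.single 3 d)) (1 : ZMod 2) := by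
  simp [MM, X_pow_eq_monomial, monomial_mul]

lemma Good_CMM (c : ZMod 2) (a d : ℕ) : Good (C c * MM a 0 d) := by
  rw [MM_zero_eq, C_mul_monomial, mul_one]
  intro m hm
  rw [MvPolynomial.mem_support_iff, MvPolynomial.coeff_monomial] at hm
  by_cases h : Finsupp.single 0 a + Finsupp.single 3 d = m
  · subst h
    constructor <;> simp [Finsupp.single_apply]
  · rw [if_neg h] at hm; exact absurd rfl hm

def P1 : Ideal A := Ideal.span ({X 1, fA} : Set A)

lemma spanf_le_P1 : Ideal.span ({fA} : Set A) ≤ P1 :=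
  Ideal.span_mono (by simp)

lemma X1_mem_P1 : (X 1 : A) ∈ P1 := Ideal.subset_span (by simp)

lemma monomial_X1_mem {m : Fin 4 →₀ ℕ} (c : ZMod 2) (h1 : m 1 ≠ 0) {I : Ideal A}
    (hX1 : (X 1 : A) ∈ I) : (monomial m) c ∈ I := by
  have hm : Finsupp.single 1 1 + (m - Finsupp.single 1 1) = m := by
    ext i
    by_cases hi : i = (1 : Fin 4)
    · subst hi
      simp [Finsupp.tsub_apply]
      omega
    · simp [Finsupp.single_apply, Ne.symm hi, Finsupp.tsub_apply]
  have he : (monomial m) c = X 1 * (monomial (m - Finsupp.single 1 1)) c := by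
    rw [show (X 1 : A) = (monomial (Finsupp.single 1 1)) 1 by
      rw [← X_pow_eq_monomial, pow_one]]
    rw [monomial_mul, one_mul, hm]
  rw [he]
  exact Ideal.mul_mem_right _ _ hX1

lemma exists_NF (p : A) : ∃ q₀ q₁ : A, Good q₀ ∧ Good q₁ ∧ p - (q₀ + X 2 * q₁) ∈ P1 := by
  induction p using MvPolynomial.induction_on' with
  | monomial m c =>
    by_cases h1 : m 1 = 0
    · have hmon : (monomial m) c = C c * MM (m 0) (m 2) (m 3) := by
        rw [← monomial_eq_MM m h1, C_mul_monomial, mul_one]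
      have hred := MM_reduce (m 2) (m 0) (m 3)
      have hmod : (m 2) % 2 = 0 ∨ (m 2) % 2 = 1 := by omega
      rcases hmod with he | he
      · refine ⟨C c * MM (m 0 + 2 * (m 2 / 2)) 0 (m 3 + m 2 / 2), 0, Good_CMM _ _ _,
          Good_zero, ?_⟩
        rw [mul_zero, add_zero, hmon, ← mul_sub]
        apply spanf_le_P1
        rw [← he]
        exact Ideal.mul_mem_left _ _ hred
      · refine ⟨0, C c * MM (m 0 + 2 * (m 2 / 2)) 0 (m 3 + m 2 / 2), Good_zero,
          Good_CMM _ _ _, ?_⟩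
        have hX2 : X 2 * (C c * MM (m 0 + 2 * (m 2 / 2)) 0 (m 3 + m 2 / 2)) =
            C c * MM (m 0 + 2 * (m 2 / 2)) 1 (m 3 + m 2 / 2) := by
          simp only [MM]; ring
        rw [zero_add, hX2, hmon, ← mul_sub]
        apply spanf_le_P1
        rw [← he]
        exact Ideal.mul_mem_left _ _ hred
    · exact ⟨0, 0, Good_zero, Good_zero, by
        rw [mul_zero, add_zero, sub_zero]
        exact monomial_X1_mem c h1 X1_mem_P1⟩
  | add p q hp hq =>
    obtain ⟨a₀, a₁, ha₀, ha₁, hamem⟩ := hp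
    obtain ⟨b₀, b₁, hb₀, hb₁, hbmem⟩ := hq
    refine ⟨a₀ + b₀, a₁ + b₁, Good_add ha₀ hb₀, Good_add ha₁ hb₁, ?_⟩
    have he : p + q - (a₀ + b₀ + X 2 * (a₁ + b₁)) =
        (p - (a₀ + X 2 * a₁)) + (q - (b₀ + X 2 * b₁)) := by ring
    rw [he]
    exact add_mem hamem hbmem

abbrev T : Type := MvPolynomial (Fin 2) (ZMod 2)

def φA : A →ₐ[ZMod 2] T := aeval ![X 0 ^ 2, 0, X 0 ^ 2 * X 1, X 1 ^ 2]

lemma good_monomial_eq {m : Fin 4 →₀ ℕ} (h1 : m 1 = 0) (h2 : m 2 = 0) (c : ZMod 2) :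
    (monomial m) c = C c * X 0 ^ (m 0) * X 3 ^ (m 3) := by
  have hm : m = Finsupp.single 0 (m 0) + Finsupp.single 3 (m 3) := by
    ext i
    fin_cases i <;> simp [Finsupp.single_apply, h1, h2] <;> rfl
  rw [hm]
  simp [X_pow_eq_monomial, monomial_mul, C_mul_monomial]

lemma φ_monomial_good {m : Fin 4 →₀ ℕ} (h1 : m 1 = 0) (h2 : m 2 = 0) (c : ZMod 2) :
    φA ((monomial m) c) =
      (monomial (Finsupp.single 0 (2 * m 0) + Finsupp.single 1 (2 * m 3))) c := by
  rw [good_monomial_eq h1 h2, map_mul, map_mul, map_pow, map_pow]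
  have hC : φA (C c) = C c := by
    simp [φA]
  have h0 : φA (X 0) = X 0 ^ 2 := by simp [φA]
  have h3 : φA (X 3) = X 1 ^ 2 := by simp [φA]
  rw [hC, h0, h3, ← pow_mul, ← pow_mul, X_pow_eq_monomial, X_pow_eq_monomial,
    C_mul_monomial, monomial_mul]
  rw [mul_one, mul_one]

lemma φ_X2_monomial_good {m : Fin 4 →₀ ℕ} (h1 : m 1 = 0) (h2 : m 2 = 0) (c : ZMod 2) :
    φA (X 2 * (monomial m) c) =
      (monomial (Finsupp.single 0 (2 * m 0 + 2) + Finsupp.single 1 (2 * m 3 + 1))) c := by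
  rw [map_mul, φ_monomial_good h1 h2]
  have hX2 : φA (X 2) = (monomial (Finsupp.single 0 2 + Finsupp.single 1 1)) (1 : ZMod 2) := by
    simp only [φA, aeval_X]
    rw [show ((![X 0 ^ 2, 0, X 0 ^ 2 * X 1, X 1 ^ 2] : Fin 4 → T) 2) = X 0 ^ 2 * X 1 from rfl]
    rw [X_pow_eq_monomial, show (X 1 : T) = X 1 ^ 1 from (pow_one _).symm, X_pow_eq_monomial,
      monomial_mul, mul_one]
  rw [hX2, monomial_mul, one_mul]
  have hee : (Finsupp.single (0 : Fin 2) 2 + Finsupp.single 1 1) +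
      (Finsupp.single (0 : Fin 2) (2 * m 0) + Finsupp.single 1 (2 * m 3)) =
      Finsupp.single (0 : Fin 2) (2 * m 0 + 2) + Finsupp.single 1 (2 * m 3 + 1) := by
    ext i
    fin_cases i <;> simp [Finsupp.single_apply] <;> ring
  rw [hee]

lemma φ_good_eq (q : A) (hq : Good q) :
    φA q = ∑ m ∈ q.support,
      (monomial (Finsupp.single 0 (2 * m 0) + Finsupp.single 1 (2 * m 3))) (coeff m q) := by
  conv_lhs => rw [MvPolynomial.as_sum q]
  rw [map_sum]
  apply Finset.sum_congr rfl
  intro m hm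
  exact φ_monomial_good (hq m hm).1 (hq m hm).2 _

lemma φ_X2_good_eq (q : A) (hq : Good q) :
    φA (X 2 * q) = ∑ m ∈ q.support,
      (monomial (Finsupp.single 0 (2 * m 0 + 2) + Finsupp.single 1 (2 * m 3 + 1))) (coeff m q) := by
  conv_lhs => rw [MvPolynomial.as_sum q]
  rw [Finset.mul_sum, map_sum]
  apply Finset.sum_congr rfl
  intro m hm
  exact φ_X2_monomial_good (hq m hm).1 (hq m hm).2 _

lemma single2_apply_eq {a b a' b' : ℕ}
    (h : (Finsupp.single (0 : Fin 2) a + Finsupp.single 1 b) =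
      Finsupp.single 0 a' + Finsupp.single 1 b') : a = a' ∧ b = b' := by
  constructor
  · have := DFunLike.congr_fun h (0 : Fin 2)
    simpa [Finsupp.single_apply] using this
  · have := DFunLike.congr_fun h (1 : Fin 2)
    simpa [Finsupp.single_apply] using this

lemma NF_inj {q₀ q₁ : A} (h₀ : Good q₀) (h₁ : Good q₁) (h : φA (q₀ + X 2 * q₁) = 0) :
    q₀ = 0 ∧ q₁ = 0 := by
  rw [map_add] at h
  have key : ∀ (q q' : A), Good q → Good q' → φA q + φA (X 2 * q') = 0 → q = 0 := by
    intro q q' hg hg' hsum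
    by_contra hne
    obtain ⟨m, hm⟩ := (MvPolynomial.support_nonempty.mpr hne)
    have hcoeff := congrArg
      (coeff (Finsupp.single (0 : Fin 2) (2 * m 0) + Finsupp.single 1 (2 * m 3))) hsum
    rw [MvPolynomial.coeff_add, MvPolynomial.coeff_zero] at hcoeff
    have hc1 : coeff (Finsupp.single (0 : Fin 2) (2 * m 0) + Finsupp.single 1 (2 * m 3))
        (φA q) = coeff m q := by
      rw [φ_good_eq q hg, MvPolynomial.coeff_sum]
      rw [Finset.sum_eq_single m]
      · rw [MvPolynomial.coeff_monomial, if_pos rfl]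
      · intro m' hm' hne'
        rw [MvPolynomial.coeff_monomial, if_neg]
        intro heq
        obtain ⟨e0, e3⟩ := single2_apply_eq heq
        apply hne'
        ext i
        fin_cases i
        · show m' 0 = m 0; omega
        · show m' 1 = m 1; rw [(hg m' hm').1, (hg m hm).1]
        · show m' 2 = m 2; rw [(hg m' hm').2, (hg m hm).2]
        · show m' 3 = m 3; omega
      · intro hnotmem; exact absurd hm hnotmem
    have hc2 : coeff (Finsupp.single (0 : Fin 2) (2 * m 0) + Finsupp.single 1 (2 * m 3))
        (φA (X 2 * q')) = 0 := by
      rw [φ_X2_good_eq q' hg', MvPolynomial.coeff_sum]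
      apply Finset.sum_eq_zero
      intro m' hm'
      rw [MvPolynomial.coeff_monomial, if_neg]
      intro heq
      obtain ⟨e0, e3⟩ := single2_apply_eq heq
      omega
    rw [hc1, hc2, add_zero] at hcoeff
    exact (MvPolynomial.mem_support_iff.mp hm) hcoeff
  have hq0 : q₀ = 0 := key q₀ q₁ h₀ h₁ h
  rw [hq0, map_zero, zero_add] at h
  constructor
  · exact hq0
  · -- now φA (X 2 * q₁) = 0 ; show q₁ = 0
    by_contra hne
    obtain ⟨m, hm⟩ := (MvPolynomial.support_nonempty.mpr hne)
    have hcoeff := congrArg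
      (coeff (Finsupp.single (0 : Fin 2) (2 * m 0 + 2) + Finsupp.single 1 (2 * m 3 + 1))) h
    rw [MvPolynomial.coeff_zero] at hcoeff
    rw [φ_X2_good_eq q₁ h₁, MvPolynomial.coeff_sum] at hcoeff
    rw [Finset.sum_eq_single m] at hcoeff
    · rw [MvPolynomial.coeff_monomial, if_pos rfl] at hcoeff
      exact (MvPolynomial.mem_support_iff.mp hm) hcoeff
    · intro m' hm' hne'
      rw [MvPolynomial.coeff_monomial, if_neg]
      intro heq
      obtain ⟨e0, e3⟩ := single2_apply_eq heq
      apply hne'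
      ext i
      fin_cases i
      · show m' 0 = m 0; omega
      · show m' 1 = m 1; rw [(h₁ m' hm').1, (h₁ m hm).1]
      · show m' 2 = m 2; rw [(h₁ m' hm').2, (h₁ m hm).2]
      · show m' 3 = m 3; omega
    · intro hnotmem; exact absurd hm hnotmem

lemma P1_le_ker : P1 ≤ RingHom.ker φA.toRingHom := by
  rw [P1, Ideal.span_le]
  rintro x hx
  simp only [Set.mem_insert_iff, Set.mem_singleton_iff] at hx
  rcases hx with rfl | rfl
  · simp [RingHom.mem_ker, φA]
  · show φA fA = 0
    rw [fA, map_add, map_mul, map_pow, map_pow]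
    have h2 : φA (X 2) = X 0 ^ 2 * X 1 := by simp [φA]
    have h0 : φA (X 0) = X 0 ^ 2 := by simp [φA]
    have h3 : φA (X 3) = X 1 ^ 2 := by simp [φA]
    rw [h2, h0, h3]
    have : ((X 0 : T) ^ 2 * X 1) ^ 2 = (X 0 ^ 2) ^ 2 * X 1 ^ 2 := by ring
    rw [this, CharTwo.add_self_eq_zero]

lemma P1_isPrime : P1.IsPrime := by
  constructor
  · intro htop
    have h1 : (1 : A) ∈ P1 := htop ▸ Submodule.mem_top
    have := P1_le_ker h1
    rw [RingHom.mem_ker, map_one] at this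
    exact one_ne_zero this
  · intro p q hpq
    obtain ⟨a₀, a₁, ha₀, ha₁, hamem⟩ := exists_NF p
    obtain ⟨b₀, b₁, hb₀, hb₁, hbmem⟩ := exists_NF q
    have hAB : (a₀ + X 2 * a₁) * (b₀ + X 2 * b₁) ∈ P1 := by
      have he : (a₀ + X 2 * a₁) * (b₀ + X 2 * b₁) =
          p * q - ((p - (a₀ + X 2 * a₁)) * q + (a₀ + X 2 * a₁) * (q - (b₀ + X 2 * b₁))) := by
        ring
      rw [he]
      exact sub_mem hpq (add_mem (Ideal.mul_mem_right _ _ hamem) (Ideal.mul_mem_left _ _ hbmem))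
    have hφ : φA (a₀ + X 2 * a₁) * φA (b₀ + X 2 * b₁) = 0 := by
      rw [← map_mul]
      exact P1_le_ker hAB
    rcases mul_eq_zero.mp hφ with h | h
    · obtain ⟨h0, h1⟩ := NF_inj ha₀ ha₁ h
      left
      have : p - (a₀ + X 2 * a₁) ∈ P1 := hamem
      rw [h0, h1, mul_zero, add_zero, sub_zero] at this
      exact this
    · obtain ⟨h0, h1⟩ := NF_inj hb₀ hb₁ h
      right
      have : q - (b₀ + X 2 * b₁) ∈ P1 := hbmem
      rw [h0, h1, mul_zero, add_zero, sub_zero] at this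
      exact this

def P2 : Ideal A := Ideal.span (X '' ({0, 1, 2} : Set (Fin 4)) : Set A)
def P3 : Ideal A := Ideal.span (X '' ({1, 2, 3} : Set (Fin 4)) : Set A)

lemma X_image_012 : (X '' ({0, 1, 2} : Set (Fin 4)) : Set A) = {X 0, X 1, X 2} := by
  simp [Set.image_insert_eq]

lemma X_image_123 : (X '' ({1, 2, 3} : Set (Fin 4)) : Set A) = {X 1, X 2, X 3} := by
  simp [Set.image_insert_eq]

lemma fA_mem_relA1 : fA ∈ relA1 := Ideal.subset_span (by simp [fA])

lemma relA1_le_P1 : relA1 ≤ P1 := by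
  rw [Ideal.span_le]
  rintro x hx
  simp only [Set.mem_insert_iff, Set.mem_singleton_iff] at hx
  rcases hx with rfl | rfl | rfl | rfl
  · exact Ideal.mul_mem_left _ _ X1_mem_P1
  · rw [pow_succ]; exact Ideal.mul_mem_left _ _ X1_mem_P1
  · exact Ideal.mul_mem_right _ _ X1_mem_P1
  · exact Ideal.subset_span (by simp [fA])

lemma relA1_le_P2 : relA1 ≤ P2 := by
  rw [Ideal.span_le]
  have h0 : (X 0 : A) ∈ P2 := Ideal.subset_span (X_image_012 ▸ (by simp))
  have h1 : (X 1 : A) ∈ P2 := Ideal.subset_span (X_image_012 ▸ (by simp))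
  have h2 : (X 2 : A) ∈ P2 := Ideal.subset_span (X_image_012 ▸ (by simp))
  rintro x hx
  simp only [Set.mem_insert_iff, Set.mem_singleton_iff] at hx
  rcases hx with rfl | rfl | rfl | rfl
  · exact Ideal.mul_mem_left _ _ h1
  · rw [pow_succ]; exact Ideal.mul_mem_left _ _ h1
  · exact Ideal.mul_mem_right _ _ h1
  · exact add_mem (by rw [pow_two]; exact Ideal.mul_mem_left _ _ h2)
      (by rw [pow_two]; exact Ideal.mul_mem_right _ _ (Ideal.mul_mem_left _ _ h0))

lemma relA1_le_P3 : relA1 ≤ P3 := by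
  rw [Ideal.span_le]
  have h1 : (X 1 : A) ∈ P3 := Ideal.subset_span (X_image_123 ▸ (by simp))
  have h2 : (X 2 : A) ∈ P3 := Ideal.subset_span (X_image_123 ▸ (by simp))
  have h3 : (X 3 : A) ∈ P3 := Ideal.subset_span (X_image_123 ▸ (by simp))
  rintro x hx
  simp only [Set.mem_insert_iff, Set.mem_singleton_iff] at hx
  rcases hx with rfl | rfl | rfl | rfl
  · exact Ideal.mul_mem_left _ _ h1
  · rw [pow_succ]; exact Ideal.mul_mem_left _ _ h1
  · exact Ideal.mul_mem_right _ _ h1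
  · exact add_mem (by rw [pow_two]; exact Ideal.mul_mem_right _ _ h2)
      (Ideal.mul_mem_left _ _ h3)

abbrev mkA : MvPolynomial (Fin 4) (ZMod 2) →+* CohA1 := Ideal.Quotient.mk relA1

lemma mapP1 : Ideal.map mkA P1 = Ideal.span {clA1 (X 1)} := by
  rw [P1, Ideal.map_span, Set.image_insert_eq, Set.image_singleton]
  have hf0 : mkA fA = 0 := Ideal.Quotient.eq_zero_iff_mem.2 fA_mem_relA1
  rw [show (mkA fA : CohA1) = 0 from hf0]
  apply le_antisymm
  · rw [Ideal.span_le]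
    rintro x hx
    simp only [Set.mem_insert_iff, Set.mem_singleton_iff] at hx
    rcases hx with rfl | rfl
    · exact Ideal.subset_span rfl
    · exact zero_mem _
  · exact Ideal.span_mono (Set.singleton_subset_iff.mpr (Set.mem_insert _ _))

lemma mapP2 : Ideal.map mkA P2 = Ideal.span {clA1 (X 1), clA1 (X 0), clA1 (X 2)} := by
  rw [P2, Ideal.map_span, X_image_012, Set.image_insert_eq, Set.image_insert_eq,
    Set.image_singleton]
  have hset : ({mkA (X 0), mkA (X 1), mkA (X 2)} : Set CohA1) =
      {clA1 (X 1), clA1 (X 0), clA1 (X 2)} := by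
    rw [Set.insert_comm]
  rw [hset]

lemma mapP3 : Ideal.map mkA P3 = Ideal.span {clA1 (X 1), clA1 (X 2), clA1 (X 3)} := by
  rw [P3, Ideal.map_span, X_image_123, Set.image_insert_eq, Set.image_insert_eq,
    Set.image_singleton]

lemma comap_map_eq {P : Ideal A} (hle : relA1 ≤ P) : Ideal.comap mkA (Ideal.map mkA P) = P := by
  rw [Ideal.comap_map_of_surjective _ Ideal.Quotient.mk_surjective]
  have hk : Ideal.comap mkA ⊥ = relA1 := by
    rw [← RingHom.ker_eq_comap_bot, Ideal.mk_ker]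
  rw [hk, sup_eq_left.2 hle]

lemma comapJ1 : Ideal.comap mkA (Ideal.span {clA1 (X 1)}) = P1 := by
  rw [← mapP1]; exact comap_map_eq relA1_le_P1

lemma comapJ2 : Ideal.comap mkA (Ideal.span {clA1 (X 1), clA1 (X 0), clA1 (X 2)}) = P2 := by
  rw [← mapP2]; exact comap_map_eq relA1_le_P2

lemma comapJ3 : Ideal.comap mkA (Ideal.span {clA1 (X 1), clA1 (X 2), clA1 (X 3)}) = P3 := by
  rw [← mapP3]; exact comap_map_eq relA1_le_P3

lemma not_mem_span_of_eval (S : Set A) (v : Fin 4 → ZMod 2) (hS : ∀ x ∈ S, eval v x = 0)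
    {p : A} (hp : eval v p ≠ 0) : p ∉ Ideal.span S := by
  intro h
  apply hp
  have hle : Ideal.span S ≤ RingHom.ker (eval v) := Ideal.span_le.2 (fun x hx => hS x hx)
  exact hle h

lemma X0_not_mem_P1 : (X 0 : A) ∉ P1 := by
  apply not_mem_span_of_eval _ ![1, 0, 0, 0]
  · rintro x hx
    simp only [Set.mem_insert_iff, Set.mem_singleton_iff] at hx
    rcases hx with rfl | rfl <;> simp [fA]
  · simp

lemma X3_not_mem_P1 : (X 3 : A) ∉ P1 := by
  apply not_mem_span_of_eval _ ![0, 0, 0, 1]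
  · rintro x hx
    simp only [Set.mem_insert_iff, Set.mem_singleton_iff] at hx
    rcases hx with rfl | rfl <;> simp [fA]
  · simp

lemma X3_not_mem_P2 : (X 3 : A) ∉ P2 := by
  rw [P2, X_image_012]
  apply not_mem_span_of_eval _ ![0, 0, 0, 1]
  · rintro x hx
    simp only [Set.mem_insert_iff, Set.mem_singleton_iff] at hx
    rcases hx with rfl | rfl | rfl <;> simp
  · simp

lemma X0_not_mem_P3 : (X 0 : A) ∉ P3 := by
  rw [P3, X_image_123]
  apply not_mem_span_of_eval _ ![1, 0, 0, 0]
  · rintro x hx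
    simp only [Set.mem_insert_iff, Set.mem_singleton_iff] at hx
    rcases hx with rfl | rfl | rfl <;> simp
  · simp

lemma P1_whc {p : A} (hp : p ∈ P1) (n : ℕ × ℕ) :
    weightedHomogeneousComponent bideg n p ∈ P1 := by
  obtain ⟨u, v, huv⟩ := Ideal.mem_span_pair.mp hp
  rw [← huv, map_add]
  apply add_mem
  · have h1 := whc_mul_mem (isWeightedHomogeneous_X (R := ZMod 2) bideg 1) u n
    have hle : Ideal.span ({X 1} : Set A) ≤ P1 := Ideal.span_mono (by simp)
    exact hle h1
  · exact spanf_le_P1 (whc_mul_mem hfA_hom v n)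

lemma zmod2_eq_one {u : ZMod 2} (hu : u ≠ 0) : u = 1 := by revert hu; revert u; decide

lemma comp_mem_P1 {P : Ideal A} (hPp : P.IsPrime) (hfP : fA ∈ P)
    (h0 : (X 0 : A) ∉ P) (h3 : (X 3 : A) ∉ P) (h2 : (X 2 : A) ∉ P)
    (hspanX1 : Ideal.span ({X 1} : Set A) ≤ P)
    {c : A} {n : ℕ × ℕ} (hchom : c.IsWeightedHomogeneous bideg n) (hcP : c ∈ P) :
    c ∈ P1 := by
  classical
  have hfle : Ideal.span ({fA} : Set A) ≤ P :=
    Ideal.span_le.2 (Set.singleton_subset_iff.2 hfP)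
  have hX1le : Ideal.span ({X 1} : Set A) ≤ P1 := Ideal.span_mono (by simp)
  set S := c.support.filter (fun m => m 1 = 0) with hS
  set c' : A := ∑ m ∈ S, (monomial m) (coeff m c) with hc'
  have hdiff : c - c' ∈ Ideal.span ({X 1} : Set A) := by
    rw [show ({X 1} : Set A) = X '' {1} by simp, mem_ideal_span_X_image]
    intro m hm
    refine ⟨1, by simp, ?_⟩
    have hne := MvPolynomial.mem_support_iff.mp hm
    by_contra hm1
    apply hne
    rw [MvPolynomial.coeff_sub]
    have hcc' : coeff m c' = coeff m c := by
      rw [hc', MvPolynomial.coeff_sum]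
      have hcongr : ∀ m' ∈ S,
          coeff m ((monomial m') (coeff m' c)) = if m' = m then coeff m c else 0 := by
        intro m' _
        rw [MvPolynomial.coeff_monomial]
        by_cases h : m' = m
        · subst h; simp
        · simp [h]
      rw [Finset.sum_congr rfl hcongr, Finset.sum_ite_eq' S m (fun _ => coeff m c)]
      by_cases hmem : m ∈ S
      · rw [if_pos hmem]
      · rw [if_neg hmem]
        by_cases hsup : m ∈ c.support
        · exact absurd (Finset.mem_filter.mpr ⟨hsup, hm1⟩) hmem
        · rw [MvPolynomial.notMem_support_iff.mp hsup]
    rw [hcc', sub_self]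
  have hc'P : c' ∈ P := by
    have h' : c - (c - c') = c' := by ring
    rw [← h']
    exact sub_mem hcP (hspanX1 hdiff)
  rcases S.eq_empty_or_nonempty with hSe | ⟨m₀, hm₀⟩
  · have hz : c' = 0 := by rw [hc', hSe, Finset.sum_empty]
    have hmem := hX1le hdiff
    rwa [hz, sub_zero] at hmem
  · obtain ⟨hm₀sup, hm₀1⟩ := Finset.mem_filter.mp hm₀
    have hred : ∀ m ∈ S, (monomial m) (1 : ZMod 2) -
        MM (m₀ 0 + 2 * (m₀ 2 / 2)) (m₀ 2 % 2) (m₀ 3 + m₀ 2 / 2) ∈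
        Ideal.span ({fA} : Set A) := by
      intro m hm
      obtain ⟨hmsup, hm1⟩ := Finset.mem_filter.mp hm
      have hw : Finsupp.weight bideg m = Finsupp.weight bideg m₀ := by
        rw [hchom (MvPolynomial.mem_support_iff.mp hmsup),
          hchom (MvPolynomial.mem_support_iff.mp hm₀sup)]
      obtain ⟨e1, e2, e3⟩ := reduced_eq hm1 hm₀1 hw
      rw [monomial_eq_MM m hm1]
      have hr := MM_reduce (m 2) (m 0) (m 3)
      rwa [e1, e2, e3] at hr
    have hsum : c' = ∑ m ∈ S, (monomial m) (1 : ZMod 2) := by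
      rw [hc']
      apply Finset.sum_congr rfl
      intro m hm
      rw [zmod2_eq_one (MvPolynomial.mem_support_iff.mp (Finset.mem_filter.mp hm).1)]
    set mst : A := MM (m₀ 0 + 2 * (m₀ 2 / 2)) (m₀ 2 % 2) (m₀ 3 + m₀ 2 / 2) with hmst
    have hcard : c' - (S.card • mst) ∈ Ideal.span ({fA} : Set A) := by
      rw [hsum, ← Finset.sum_const, ← Finset.sum_sub_distrib]
      exact Ideal.sum_mem _ (fun m hm => hred m hm)
    by_cases hpar : Even S.card
    · have hzero : (S.card • mst : A) = 0 := by
        obtain ⟨k, hk⟩ := hpar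
        rw [hk, add_nsmul]
        exact CharTwo.add_self_eq_zero _
      rw [hzero, sub_zero] at hcard
      have hcc : c = (c - c') + c' := by ring
      rw [hcc]
      exact add_mem (hX1le hdiff) (spanf_le_P1 hcard)
    · exfalso
      rw [Nat.not_even_iff_odd] at hpar
      obtain ⟨k, hk⟩ := hpar
      have hsmul : (S.card • mst : A) = mst := by
        rw [hk, add_nsmul, one_nsmul, two_mul, add_nsmul, CharTwo.add_self_eq_zero, zero_add]
      have hms : mst ∈ P := by
        have h' : c' - (c' - S.card • mst) = S.card • mst := by ring
        have hmem : (S.card • mst : A) ∈ P := by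
          rw [← h']
          exact sub_mem hc'P (hfle hcard)
        rwa [hsmul] at hmem
      rw [hmst, MM] at hms
      rcases hPp.mem_or_mem hms with h | h
      · rcases hPp.mem_or_mem h with h' | h'
        · exact h0 (hPp.mem_of_pow_mem _ h')
        · exact h2 (hPp.mem_of_pow_mem _ h')
      · exact h3 (hPp.mem_of_pow_mem _ h)

lemma classify {J : Ideal CohA1} (hp : J.IsPrime) (hbh : IsBihomogeneous J)
    (hirr : ¬ irrelevantA1 ≤ J) :
    Ideal.comap mkA J = P1 ∨ Ideal.comap mkA J = P2 ∨ Ideal.comap mkA J = P3 := by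
  classical
  set P := Ideal.comap mkA J with hPdef
  haveI hJp := hp
  have hPp : P.IsPrime := Ideal.IsPrime.comap _
  have hmem : ∀ p : A, p ∈ P ↔ clA1 p ∈ J := fun p => Iff.rfl
  have hrel : relA1 ≤ P := by
    intro x hx
    rw [hmem, show clA1 x = 0 from Ideal.Quotient.eq_zero_iff_mem.2 hx]
    exact zero_mem J
  have hcomp : ∀ p ∈ P, ∀ n : ℕ × ℕ, weightedHomogeneousComponent bideg n p ∈ P :=
    fun p hpP n => (hmem _).mpr (hbh p ((hmem p).mp hpP) n)
  have hX1 : (X 1 : A) ∈ P :=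
    hPp.mem_of_pow_mem 3 (hrel (Ideal.subset_span (by simp)))
  have hfP : fA ∈ P := hrel fA_mem_relA1
  have hX1le : Ideal.span ({X 1} : Set A) ≤ P :=
    Ideal.span_le.2 (Set.singleton_subset_iff.2 hX1)
  have key2 : (X 2 : A) * X 2 = fA + X 0 ^ 2 * X 3 := by
    rw [fA, add_assoc, CharTwo.add_self_eq_zero, add_zero, pow_two]
  have key : (X 2 : A) * X 2 + fA = X 0 ^ 2 * X 3 := by
    rw [fA, ← pow_two, ← add_assoc, CharTwo.add_self_eq_zero, zero_add]
  have hX2of0 : (X 0 : A) ∈ P → (X 2 : A) ∈ P := by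
    intro h0
    have hmul : (X 2 : A) * X 2 ∈ P := by
      rw [key2, pow_two]
      exact add_mem hfP (Ideal.mul_mem_right _ _ (Ideal.mul_mem_right _ _ h0))
    rcases hPp.mem_or_mem hmul with h | h <;> exact h
  have hX2of3 : (X 3 : A) ∈ P → (X 2 : A) ∈ P := by
    intro h3
    have hmul : (X 2 : A) * X 2 ∈ P := by
      rw [key2]
      exact add_mem hfP (Ideal.mul_mem_left _ _ h3)
    rcases hPp.mem_or_mem hmul with h | h <;> exact h
  have hnotboth : ¬ ((X 0 : A) ∈ P ∧ (X 3 : A) ∈ P) := by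
    rintro ⟨h0, h3⟩
    apply hirr
    rw [irrelevantA1, Ideal.span_le]
    rintro x hx
    simp only [Set.mem_insert_iff, Set.mem_singleton_iff] at hx
    rcases hx with rfl | rfl | rfl | rfl
    · exact (hmem _).mp h0
    · exact (hmem _).mp hX1
    · exact (hmem _).mp (hX2of0 h0)
    · exact (hmem _).mp h3
  by_cases h0 : (X 0 : A) ∈ P
  · right; left
    have h3 : (X 3 : A) ∉ P := fun h => hnotboth ⟨h0, h⟩
    have hX2 : (X 2 : A) ∈ P := hX2of0 h0
    have hP2P : P2 ≤ P := by
      rw [P2, Ideal.span_le]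
      rintro x ⟨i, hi, rfl⟩
      simp only [Set.mem_insert_iff, Set.mem_singleton_iff] at hi
      rcases hi with rfl | rfl | rfl
      · exact h0
      · exact hX1
      · exact hX2
    refine le_antisymm ?_ hP2P
    intro g hg
    rw [P2, mem_ideal_span_X_image]
    by_contra hcon
    push_neg at hcon
    obtain ⟨m, hmsup, hmz⟩ := hcon
    have hm0 : m 0 = 0 := hmz 0 (by simp)
    have hm1 : m 1 = 0 := hmz 1 (by simp)
    have hm2 : m 2 = 0 := hmz 2 (by simp)
    set n := Finsupp.weight bideg m with hn
    have hcP : weightedHomogeneousComponent bideg n g ∈ P := hcomp g hg n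
    have hdiffP2 : weightedHomogeneousComponent bideg n g - (monomial m) 1 ∈ P2 := by
      rw [P2, mem_ideal_span_X_image]
      intro m' hm'
      by_contra hcon2
      push_neg at hcon2
      have hm'0 : m' 0 = 0 := hcon2 0 (by simp)
      have hm'1 : m' 1 = 0 := hcon2 1 (by simp)
      have hm'2 : m' 2 = 0 := hcon2 2 (by simp)
      have hne := MvPolynomial.mem_support_iff.mp hm'
      rw [MvPolynomial.coeff_sub, coeff_weightedHomogeneousComponent,
        MvPolynomial.coeff_monomial] at hne
      by_cases hmm : m' = m
      · subst hmm
        rw [if_pos hn.symm, if_pos rfl,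
          zmod2_eq_one (MvPolynomial.mem_support_iff.mp hmsup), sub_self] at hne
        exact hne rfl
      · have hw : Finsupp.weight bideg m' = n := by
          by_contra hw'
          rw [if_neg hw', if_neg (fun h : m = m' => hmm h.symm), sub_zero] at hne
          exact hne rfl
        rw [hn, weight_bideg, weight_bideg, Prod.ext_iff] at hw
        obtain ⟨e1, e2⟩ := hw
        apply hmm
        ext i
        fin_cases i
        · show m' 0 = m 0; omega
        · show m' 1 = m 1; omega
        · show m' 2 = m 2; omega
        · show m' 3 = m 3; omega
    have hmonP : (monomial m) (1 : ZMod 2) ∈ P := by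
      have hsub := sub_mem hcP (hP2P hdiffP2)
      rw [sub_sub_cancel] at hsub
      exact hsub
    have hXpow : (monomial m) (1 : ZMod 2) = X 3 ^ (m 3) := by
      have hmeq : m = Finsupp.single 3 (m 3) := by
        ext i
        fin_cases i <;> simp [Finsupp.single_apply, hm0, hm1, hm2] <;> rfl
      rw [X_pow_eq_monomial, ← hmeq]
    have hk : m 3 ≠ 0 := by
      intro hk0
      apply hPp.ne_top
      rw [Ideal.eq_top_iff_one]
      have hone : (monomial m) (1 : ZMod 2) = 1 := by rw [hXpow, hk0, pow_zero]
      rwa [hone] at hmonP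
    exact h3 (hPp.mem_of_pow_mem _ (hXpow ▸ hmonP))
  · by_cases h3 : (X 3 : A) ∈ P
    · right; right
      have hX2 : (X 2 : A) ∈ P := hX2of3 h3
      have hP3P : P3 ≤ P := by
        rw [P3, Ideal.span_le]
        rintro x ⟨i, hi, rfl⟩
        simp only [Set.mem_insert_iff, Set.mem_singleton_iff] at hi
        rcases hi with rfl | rfl | rfl
        · exact hX1
        · exact hX2
        · exact h3
      refine le_antisymm ?_ hP3P
      intro g hg
      rw [P3, mem_ideal_span_X_image]
      by_contra hcon
      push_neg at hcon
      obtain ⟨m, hmsup, hmz⟩ := hcon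
      have hm1 : m 1 = 0 := hmz 1 (by simp)
      have hm2 : m 2 = 0 := hmz 2 (by simp)
      have hm3 : m 3 = 0 := hmz 3 (by simp)
      set n := Finsupp.weight bideg m with hn
      have hcP : weightedHomogeneousComponent bideg n g ∈ P := hcomp g hg n
      have hdiffP3 : weightedHomogeneousComponent bideg n g - (monomial m) 1 ∈ P3 := by
        rw [P3, mem_ideal_span_X_image]
        intro m' hm'
        by_contra hcon2
        push_neg at hcon2
        have hm'1 : m' 1 = 0 := hcon2 1 (by simp)
        have hm'2 : m' 2 = 0 := hcon2 2 (by simp)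
        have hm'3 : m' 3 = 0 := hcon2 3 (by simp)
        have hne := MvPolynomial.mem_support_iff.mp hm'
        rw [MvPolynomial.coeff_sub, coeff_weightedHomogeneousComponent,
          MvPolynomial.coeff_monomial] at hne
        by_cases hmm : m' = m
        · subst hmm
          rw [if_pos hn.symm, if_pos rfl,
            zmod2_eq_one (MvPolynomial.mem_support_iff.mp hmsup), sub_self] at hne
          exact hne rfl
        · have hw : Finsupp.weight bideg m' = n := by
            by_contra hw'
            rw [if_neg hw', if_neg (fun h : m = m' => hmm h.symm), sub_zero] at hne
            exact hne rfl
          rw [hn, weight_bideg, weight_bideg, Prod.ext_iff] at hw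
          obtain ⟨e1, e2⟩ := hw
          apply hmm
          ext i
          fin_cases i
          · show m' 0 = m 0; omega
          · show m' 1 = m 1; omega
          · show m' 2 = m 2; omega
          · show m' 3 = m 3; omega
      have hmonP : (monomial m) (1 : ZMod 2) ∈ P := by
        have hsub := sub_mem hcP (hP3P hdiffP3)
        rw [sub_sub_cancel] at hsub
        exact hsub
      have hXpow : (monomial m) (1 : ZMod 2) = X 0 ^ (m 0) := by
        have hmeq : m = Finsupp.single 0 (m 0) := by
          ext i
          fin_cases i <;> simp [Finsupp.single_apply, hm1, hm2, hm3] <;> rfl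
        rw [X_pow_eq_monomial, ← hmeq]
      have hk : m 0 ≠ 0 := by
        intro hk0
        apply hPp.ne_top
        rw [Ideal.eq_top_iff_one]
        have hone : (monomial m) (1 : ZMod 2) = 1 := by rw [hXpow, hk0, pow_zero]
        rwa [hone] at hmonP
      exact h0 (hPp.mem_of_pow_mem _ (hXpow ▸ hmonP))
    · left
      have hX2n : (X 2 : A) ∉ P := by
        intro h2m
        have hmul : (X 0 : A) ^ 2 * X 3 ∈ P := by
          rw [← key]
          exact add_mem (Ideal.mul_mem_left _ _ h2m) hfP
        rcases hPp.mem_or_mem hmul with h | h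
        · exact h0 (hPp.mem_of_pow_mem _ h)
        · exact h3 h
      refine le_antisymm ?_ ?_
      · intro g hg
        rw [← sum_weightedHomogeneousComponent bideg g,
          finsum_eq_sum _ (weightedHomogeneousComponent_finsupp g)]
        apply Ideal.sum_mem
        intro n _
        exact comp_mem_P1 hPp hfP h0 h3 hX2n hX1le
          (weightedHomogeneousComponent_isWeightedHomogeneous n g) (hcomp g hg n)
      · rw [P1, Ideal.span_le]
        rintro x hx
        simp only [Set.mem_insert_iff, Set.mem_singleton_iff] at hx
        rcases hx with rfl | rfl
        · exact hX1
        · exact hfP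

lemma J1_prime : (Ideal.span {clA1 (X 1)}).IsPrime := by
  rw [← mapP1]
  haveI := P1_isPrime
  exact Ideal.map_isPrime_of_surjective Ideal.Quotient.mk_surjective
    (by rw [Ideal.mk_ker]; exact relA1_le_P1)

lemma J2_prime : (Ideal.span {clA1 (X 1), clA1 (X 0), clA1 (X 2)}).IsPrime := by
  rw [← mapP2]
  haveI : P2.IsPrime := isPrime_spanX ({0, 1, 2} : Set (Fin 4))
  exact Ideal.map_isPrime_of_surjective Ideal.Quotient.mk_surjective
    (by rw [Ideal.mk_ker]; exact relA1_le_P2)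

lemma J3_prime : (Ideal.span {clA1 (X 1), clA1 (X 2), clA1 (X 3)}).IsPrime := by
  rw [← mapP3]
  haveI : P3.IsPrime := isPrime_spanX ({1, 2, 3} : Set (Fin 4))
  exact Ideal.map_isPrime_of_surjective Ideal.Quotient.mk_surjective
    (by rw [Ideal.mk_ker]; exact relA1_le_P3)

lemma J1_bihom : IsBihomogeneous (Ideal.span {clA1 (X 1)}) := by
  intro g hg n
  have hgP : g ∈ P1 := by rw [← comapJ1]; exact hg
  have hwhc := P1_whc hgP n
  have h2 : weightedHomogeneousComponent bideg n g ∈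
      Ideal.comap mkA (Ideal.span {clA1 (X 1)}) := by rw [comapJ1]; exact hwhc
  exact h2

lemma J2_bihom : IsBihomogeneous (Ideal.span {clA1 (X 1), clA1 (X 0), clA1 (X 2)}) := by
  intro g hg n
  have hgP : g ∈ P2 := by rw [← comapJ2]; exact hg
  rw [P2] at hgP
  have hwhc := spanX_whc _ hgP n
  have h2 : weightedHomogeneousComponent bideg n g ∈
      Ideal.comap mkA (Ideal.span {clA1 (X 1), clA1 (X 0), clA1 (X 2)}) := by
    rw [comapJ2, P2]; exact hwhc
  exact h2

lemma J3_bihom : IsBihomogeneous (Ideal.span {clA1 (X 1), clA1 (X 2), clA1 (X 3)}) := by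
  intro g hg n
  have hgP : g ∈ P3 := by rw [← comapJ3]; exact hg
  rw [P3] at hgP
  have hwhc := spanX_whc _ hgP n
  have h2 : weightedHomogeneousComponent bideg n g ∈
      Ideal.comap mkA (Ideal.span {clA1 (X 1), clA1 (X 2), clA1 (X 3)}) := by
    rw [comapJ3, P3]; exact hwhc
  exact h2

lemma J1_not_irr : ¬ irrelevantA1 ≤ Ideal.span {clA1 (X 1)} := by
  intro hle
  have h3 : clA1 (X 3) ∈ Ideal.span {clA1 (X 1)} := hle (Ideal.subset_span (by simp))
  have hmem : (X 3 : A) ∈ P1 := by rw [← comapJ1]; exact h3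
  exact X3_not_mem_P1 hmem

lemma J2_not_irr : ¬ irrelevantA1 ≤ Ideal.span {clA1 (X 1), clA1 (X 0), clA1 (X 2)} := by
  intro hle
  have h3 : clA1 (X 3) ∈ Ideal.span {clA1 (X 1), clA1 (X 0), clA1 (X 2)} :=
    hle (Ideal.subset_span (by simp))
  have hmem : (X 3 : A) ∈ P2 := by rw [← comapJ2]; exact h3
  exact X3_not_mem_P2 hmem

lemma J3_not_irr : ¬ irrelevantA1 ≤ Ideal.span {clA1 (X 1), clA1 (X 2), clA1 (X 3)} := by
  intro hle
  have h3 : clA1 (X 0) ∈ Ideal.span {clA1 (X 1), clA1 (X 2), clA1 (X 3)} :=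
    hle (Ideal.subset_span (by simp))
  have hmem : (X 0 : A) ∈ P3 := by rw [← comapJ3]; exact h3
  exact X0_not_mem_P3 hmem

lemma X0_mem_P2 : (X 0 : A) ∈ P2 := Ideal.subset_span ⟨0, by simp, rfl⟩
lemma X3_mem_P3 : (X 3 : A) ∈ P3 := Ideal.subset_span ⟨3, by simp, rfl⟩

lemma J12_ne : Ideal.span {clA1 (X 1)} ≠ Ideal.span {clA1 (X 1), clA1 (X 0), clA1 (X 2)} := by
  intro h
  have hc := congrArg (Ideal.comap mkA) h
  rw [comapJ1, comapJ2] at hc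
  exact X0_not_mem_P1 (hc ▸ X0_mem_P2)

lemma J13_ne : Ideal.span {clA1 (X 1)} ≠ Ideal.span {clA1 (X 1), clA1 (X 2), clA1 (X 3)} := by
  intro h
  have hc := congrArg (Ideal.comap mkA) h
  rw [comapJ1, comapJ3] at hc
  exact X3_not_mem_P1 (hc ▸ X3_mem_P3)

lemma J23_ne : Ideal.span {clA1 (X 1), clA1 (X 0), clA1 (X 2)} ≠
    Ideal.span {clA1 (X 1), clA1 (X 2), clA1 (X 3)} := by
  intro h
  have hc := congrArg (Ideal.comap mkA) h
  rw [comapJ2, comapJ3] at hc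
  exact X0_not_mem_P3 (hc ▸ X0_mem_P2)

lemma rad_eq : (Ideal.span {clA1 (X 1), clA1 (X 0), clA1 (X 2)} : Ideal CohA1) =
    (Ideal.span {clA1 (X 1), clA1 (X 0)} : Ideal CohA1).radical := by
  apply le_antisymm
  · rw [Ideal.span_le]
    rintro x hx
    simp only [Set.mem_insert_iff, Set.mem_singleton_iff] at hx
    rcases hx with rfl | rfl | rfl
    · exact Ideal.le_radical (Ideal.subset_span (by simp))
    · exact Ideal.le_radical (Ideal.subset_span (by simp))
    · refine ⟨2, ?_⟩
      have hsq : (clA1 (X 2)) ^ 2 = clA1 (X 0 ^ 2 * X 3) := by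
        rw [← map_pow]
        rw [Ideal.Quotient.eq]
        rw [CharTwo.sub_eq_add]
        exact Ideal.subset_span (by simp)
      rw [hsq]
      have hmul : clA1 (X 0 ^ 2 * X 3) = clA1 (X 0) * clA1 (X 0 * X 3) := by
        rw [← map_mul]
        congr 1
        ring
      rw [hmul]
      exact Ideal.mul_mem_right _ _ (Ideal.subset_span (by simp))
  · rw [Ideal.IsPrime.radical_le_iff J2_prime]
    exact Ideal.span_mono (Set.insert_subset_insert (Set.singleton_subset_iff.2 (Set.mem_insert _ _)))

end SpcA1

open SpcA1

/-- The spectrum of the stable module category of `𝒜(1)` has exactly three points: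
the bihomogeneous prime ideals of `R = 𝔽₂[v₀, η, α, β]/(v₀η, η³, ηα, α² + v₀²β)`
not containing the irrelevant ideal are exactly `(η)`, `(η, v₀, α)` and `(η, α, β)`;
these are pairwise distinct, `(η, v₀, α)` is the radical of `(η, v₀)`, and `(η)` is
contained in each of the two others. -/
theorem spc_a1_three_points :
    {J : Ideal CohA1 | J.IsPrime ∧ IsBihomogeneous J ∧ ¬ irrelevantA1 ≤ J} =
      {Ideal.span {clA1 (X 1)},
       Ideal.span {clA1 (X 1), clA1 (X 0), clA1 (X 2)},
       Ideal.span {clA1 (X 1), clA1 (X 2), clA1 (X 3)}} ∧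
    (Ideal.span {clA1 (X 1), clA1 (X 0), clA1 (X 2)} : Ideal CohA1) =
      (Ideal.span {clA1 (X 1), clA1 (X 0)} : Ideal CohA1).radical ∧
    (Ideal.span {clA1 (X 1)} : Ideal CohA1) ≠
      Ideal.span {clA1 (X 1), clA1 (X 0), clA1 (X 2)} ∧
    (Ideal.span {clA1 (X 1)} : Ideal CohA1) ≠
      Ideal.span {clA1 (X 1), clA1 (X 2), clA1 (X 3)} ∧
    (Ideal.span {clA1 (X 1), clA1 (X 0), clA1 (X 2)} : Ideal CohA1) ≠
      Ideal.span {clA1 (X 1), clA1 (X 2), clA1 (X 3)} ∧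
    (Ideal.span {clA1 (X 1)} : Ideal CohA1) ≤
      Ideal.span {clA1 (X 1), clA1 (X 0), clA1 (X 2)} ∧
    (Ideal.span {clA1 (X 1)} : Ideal CohA1) ≤
      Ideal.span {clA1 (X 1), clA1 (X 2), clA1 (X 3)} := by
  refine ⟨?_, rad_eq, J12_ne, J13_ne, J23_ne, ?_, ?_⟩
  · ext J
    simp only [Set.mem_setOf_eq, Set.mem_insert_iff, Set.mem_singleton_iff]
    constructor
    · rintro ⟨hp, hbh, hirr⟩
      have hJmap : J = Ideal.map mkA (Ideal.comap mkA J) :=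
        (Ideal.map_comap_of_surjective _ Ideal.Quotient.mk_surjective J).symm
      rcases classify hp hbh hirr with h | h | h
      · left; rw [hJmap, h, mapP1]
      · right; left; rw [hJmap, h, mapP2]
      · right; right; rw [hJmap, h, mapP3]
    · rintro (rfl | rfl | rfl)
      · exact ⟨J1_prime, J1_bihom, J1_not_irr⟩
      · exact ⟨J2_prime, J2_bihom, J2_not_irr⟩
      · exact ⟨J3_prime, J3_bihom, J3_not_irr⟩
  · exact Ideal.span_mono (Set.singleton_subset_iff.2 (Set.mem_insert _ _))
  · exact Ideal.span_mono (Set.singleton_subset_iff.2 (Set.mem_insert _ _))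
end
end
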